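/- arXiv:2303.09469 — 7 statements merged into one kernel-verified Lean document; each statement's English description precedes it below -/
import Mathlib

section
/- Let 0 < L_l ≤ L_u < ∞ and let 𝒯_{l,u} = {T ∈ 𝒯 : T is differentiable with L_l ≤ T′(x) ≤ L_u for all x}. Then for any T, U ∈ 𝒯_{l,u} one has ‖T⁻¹ − U⁻¹‖₂ ≤ (L_u / L_l)·‖T − U‖₂. -/
open MeasureTheory

noncomputable section

/-- The class 𝒯 of continuous strictly increasing bijections of `[0,1]` fixing `0` and `1`. -/
def InT (T : ℝ → ℝ) : Prop :=
  ContinuousOn T (Set.Icc 0 1) ∧ StrictMonoOn T (Set.Icc 0 1) ∧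
    Set.MapsTo T (Set.Icc 0 1) (Set.Icc 0 1) ∧ T 0 = 0 ∧ T 1 = 1

/-- The L²([0,1]) distance between two maps. -/
def l2dist (f g : ℝ → ℝ) : ℝ := Real.sqrt (∫ x in (0:ℝ)..1, (f x - g x)^2)

/-- for `T, U ∈ 𝒯_{l,u}` (differentiable with `L_l ≤ T′ ≤ L_u` on `[0,1]`),
with inverse bijections `Ti, Ui`: `‖T⁻¹ − U⁻¹‖₂ ≤ (L_u/L_l) ‖T − U‖₂`. -/
theorem l2_inverse_lipschitz_bound (Ll Lu : ℝ) (hLl : 0 < Ll) (hLu : Ll ≤ Lu)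
    (T U Ti Ui T' U' : ℝ → ℝ) (hT : InT T) (hU : InT U) (hTi : InT Ti) (hUi : InT Ui)
    (hT' : ∀ x ∈ Set.Icc (0:ℝ) 1,
      HasDerivWithinAt T (T' x) (Set.Icc (0:ℝ) 1) x ∧ Ll ≤ T' x ∧ T' x ≤ Lu)
    (hU' : ∀ x ∈ Set.Icc (0:ℝ) 1,
      HasDerivWithinAt U (U' x) (Set.Icc (0:ℝ) 1) x ∧ Ll ≤ U' x ∧ U' x ≤ Lu)
    (hTinv : (∀ x ∈ Set.Icc (0:ℝ) 1, Ti (T x) = x) ∧ ∀ x ∈ Set.Icc (0:ℝ) 1, T (Ti x) = x)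
    (hUinv : (∀ x ∈ Set.Icc (0:ℝ) 1, Ui (U x) = x) ∧ ∀ x ∈ Set.Icc (0:ℝ) 1, U (Ui x) = x) :
    l2dist Ti Ui ≤ (Lu / Ll) * l2dist T U := by
  have hI : Convex ℝ (Set.Icc (0:ℝ) 1) := convex_Icc 0 1
  have h01 : (0:ℝ) ≤ 1 := zero_le_one
  -- lower Lipschitz bound for T : Ll * |p - q| ≤ |T p - T q|
  have hTlow : ∀ p ∈ Set.Icc (0:ℝ) 1, ∀ q ∈ Set.Icc (0:ℝ) 1,
      Ll * |p - q| ≤ |T p - T q| := by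
    intro p hp q hq
    have hf : ∀ x ∈ Set.Icc (0:ℝ) 1,
        HasDerivWithinAt (fun x => Lu * x - T x) (Lu - T' x) (Set.Icc (0:ℝ) 1) x := by
      intro x hx
      have h := ((hasDerivWithinAt_id x (Set.Icc (0:ℝ) 1)).const_mul Lu).sub (hT' x hx).1
      simp only [mul_one] at h
      exact h
    have hb : ∀ x ∈ Set.Icc (0:ℝ) 1, ‖Lu - T' x‖ ≤ Lu - Ll := by
      intro x hx
      rw [Real.norm_eq_abs, abs_le]
      constructor <;> nlinarith [(hT' x hx).2.1, (hT' x hx).2.2]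
    have key := hI.norm_image_sub_le_of_norm_hasDerivWithin_le hf hb hq hp
    simp only [Real.norm_eq_abs] at key
    have : |Lu * p - T p - (Lu * q - T q)| = |(Lu * (p - q)) - (T p - T q)| := by ring_nf
    rw [this] at key
    have htri : |Lu * (p - q)| - |T p - T q| ≤ |(Lu * (p - q)) - (T p - T q)| :=
      abs_sub_abs_le_abs_sub _ _
    rw [abs_mul, abs_of_nonneg (le_trans hLl.le hLu)] at htri
    nlinarith [abs_nonneg (p - q)]
  -- Ti is (1/Ll)-Lipschitz on [0,1]
  have hTiLip : ∀ y ∈ Set.Icc (0:ℝ) 1, ∀ z ∈ Set.Icc (0:ℝ) 1,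
      |Ti y - Ti z| ≤ Ll⁻¹ * |y - z| := by
    intro y hy z hz
    have hp := hTi.2.2.1 hy
    have hq := hTi.2.2.1 hz
    have := hTlow (Ti y) hp (Ti z) hq
    rw [hTinv.2 y hy, hTinv.2 z hz] at this
    rw [inv_mul_eq_div, le_div_iff₀' hLl]
    exact this
  -- pointwise bound
  have hpt : ∀ x ∈ Set.Icc (0:ℝ) 1,
      (Ti x - Ui x)^2 ≤ Ll⁻¹^2 * (T (Ui x) - U (Ui x))^2 := by
    intro x hx
    have ha : Ui x ∈ Set.Icc (0:ℝ) 1 := hUi.2.2.1 hx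
    have hTa : T (Ui x) ∈ Set.Icc (0:ℝ) 1 := hT.2.2.1 ha
    have h1 : Ti x - Ui x = Ti (U (Ui x)) - Ti (T (Ui x)) := by
      rw [hUinv.2 x hx, hTinv.1 _ ha]
    have h2 : |Ti x - Ui x| ≤ Ll⁻¹ * |T (Ui x) - U (Ui x)| := by
      rw [h1, hUinv.2 x hx]
      have := hTiLip x hx (T (Ui x)) hTa
      rw [abs_sub_comm x (T (Ui x))] at this
      exact this
    have h3 : (0:ℝ) ≤ Ll⁻¹ := by positivity
    calc (Ti x - Ui x)^2 = |Ti x - Ui x|^2 := (sq_abs _).symm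
    _ ≤ (Ll⁻¹ * |T (Ui x) - U (Ui x)|)^2 := by
        apply pow_le_pow_left₀ (abs_nonneg _) h2
    _ = Ll⁻¹^2 * (T (Ui x) - U (Ui x))^2 := by
        rw [mul_pow, sq_abs]
  -- continuity facts
  have hcTU : ContinuousOn (fun y => (T y - U y)^2) (Set.Icc (0:ℝ) 1) :=
    ((hT.1.sub hU.1).pow 2)
  have hcTiUi : ContinuousOn (fun x => (Ti x - Ui x)^2) (Set.Icc (0:ℝ) 1) :=
    ((hTi.1.sub hUi.1).pow 2)
  have hcComp : ContinuousOn (fun x => (T (Ui x) - U (Ui x))^2) (Set.Icc (0:ℝ) 1) :=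
    hcTU.comp hUi.1 hUi.2.2.1
  set A := ∫ x in Set.Icc (0:ℝ) 1, (Ti x - Ui x)^2
  set B := ∫ x in Set.Icc (0:ℝ) 1, (T (Ui x) - U (Ui x))^2
  set C := ∫ y in Set.Icc (0:ℝ) 1, (T y - U y)^2
  have hAB : A ≤ Ll⁻¹^2 * B := by
    rw [← integral_const_mul]
    apply setIntegral_mono_on
    · exact hcTiUi.integrableOn_Icc
    · exact (hcComp.integrableOn_Icc.const_mul _)
    · exact measurableSet_Icc
    · exact hpt
  -- image of U on Icc 0 1
  have hUimage : U '' Set.Icc (0:ℝ) 1 = Set.Icc 0 1 := by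
    apply Set.Subset.antisymm (Set.mapsTo_iff_image_subset.mp hU.2.2.1)
    have := intermediate_value_Icc h01 hU.1
    rwa [hU.2.2.2.1, hU.2.2.2.2] at this
  have hUinj : Set.InjOn U (Set.Icc (0:ℝ) 1) := hU.2.1.injOn
  have hUd : ∀ x ∈ Set.Icc (0:ℝ) 1, HasDerivWithinAt U (U' x) (Set.Icc (0:ℝ) 1) x :=
    fun x hx => (hU' x hx).1
  -- change of variables: B = ∫ |U'| * (T-U)^2
  have hcov : (∫ x in U '' Set.Icc (0:ℝ) 1, (T (Ui x) - U (Ui x))^2)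
      = ∫ y in Set.Icc (0:ℝ) 1, |U' y| • (T (Ui (U y)) - U (Ui (U y)))^2 :=
    integral_image_eq_integral_abs_deriv_smul measurableSet_Icc hUd hUinj _
  have hBeq : B = ∫ y in Set.Icc (0:ℝ) 1, |U' y| * (T y - U y)^2 := by
    rw [show B = ∫ x in U '' Set.Icc (0:ℝ) 1, (T (Ui x) - U (Ui x))^2 by rw [hUimage], hcov]
    apply setIntegral_congr_fun measurableSet_Icc
    intro y hy
    simp only [smul_eq_mul, hUinv.1 y hy]
  have hIntAbs : IntegrableOn (fun y => |U' y| * (T y - U y)^2) (Set.Icc (0:ℝ) 1) := by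
    have hiff := integrableOn_image_iff_integrableOn_abs_deriv_smul measurableSet_Icc hUd hUinj
      (fun x => (T (Ui x) - U (Ui x))^2)
    rw [hUimage] at hiff
    have h1 : IntegrableOn (fun y => |U' y| • (T (Ui (U y)) - U (Ui (U y)))^2)
        (Set.Icc (0:ℝ) 1) := hiff.mp hcComp.integrableOn_Icc
    apply h1.congr_fun _ measurableSet_Icc
    intro y hy
    simp only [smul_eq_mul, hUinv.1 y hy]
  have hBC : B ≤ Lu * C := by
    rw [hBeq, ← integral_const_mul]
    apply setIntegral_mono_on hIntAbs (hcTU.integrableOn_Icc.const_mul _) measurableSet_Icc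
    intro y hy
    have h1 : |U' y| ≤ Lu := by
      rw [abs_of_pos (lt_of_lt_of_le hLl (hU' y hy).2.1)]
      exact (hU' y hy).2.2
    have h2 : (0:ℝ) ≤ (T y - U y)^2 := sq_nonneg _
    exact mul_le_mul_of_nonneg_right h1 h2 |>.trans_eq rfl
  -- Lu ≥ 1 from T(1)-T(0)=1 and T' ≤ Lu
  have hLu1 : (1:ℝ) ≤ Lu := by
    have hb : ∀ x ∈ Set.Icc (0:ℝ) 1, ‖T' x‖ ≤ Lu := by
      intro x hx
      rw [Real.norm_eq_abs, abs_of_pos (lt_of_lt_of_le hLl (hT' x hx).2.1)]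
      exact (hT' x hx).2.2
    have := hI.norm_image_sub_le_of_norm_hasDerivWithin_le (fun x hx => (hT' x hx).1) hb
      (Set.left_mem_Icc.mpr h01) (Set.right_mem_Icc.mpr h01)
    rw [hT.2.2.2.2, hT.2.2.2.1] at this
    simpa using this
  have hCnn : 0 ≤ C := setIntegral_nonneg measurableSet_Icc (fun y _ => sq_nonneg _)
  have hAC : A ≤ Ll⁻¹^2 * Lu * C := by
    calc A ≤ Ll⁻¹^2 * B := hAB
    _ ≤ Ll⁻¹^2 * (Lu * C) := by
        apply mul_le_mul_of_nonneg_left hBC (by positivity)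
    _ = Ll⁻¹^2 * Lu * C := by ring
  -- convert l2dist to sqrt A and sqrt C
  have hiIcc : ∀ f : ℝ → ℝ, (∫ x in (0:ℝ)..1, f x) = ∫ x in Set.Icc (0:ℝ) 1, f x := by
    intro f
    rw [intervalIntegral.integral_of_le h01, ← integral_Icc_eq_integral_Ioc]
  have hd1 : l2dist Ti Ui = Real.sqrt A := by rw [l2dist, hiIcc]
  have hd2 : l2dist T U = Real.sqrt C := by rw [l2dist, hiIcc]
  rw [hd1, hd2]
  calc Real.sqrt A ≤ Real.sqrt (Ll⁻¹^2 * Lu * C) := Real.sqrt_le_sqrt hAC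
  _ = Ll⁻¹ * Real.sqrt Lu * Real.sqrt C := by
      rw [Real.sqrt_mul (by positivity), Real.sqrt_mul (by positivity),
        Real.sqrt_sq (by positivity)]
  _ ≤ Ll⁻¹ * Lu * Real.sqrt C := by
      apply mul_le_mul_of_nonneg_right _ (Real.sqrt_nonneg _)
      apply mul_le_mul_of_nonneg_left _ (by positivity)
      have h := Real.sqrt_le_sqrt (show Lu ≤ Lu^2 by nlinarith)
      rwa [Real.sqrt_sq (by positivity)] at h
  _ = (Lu / Ll) * Real.sqrt C := by ring
end
end

section
/- Let (T_i)_{i∈ℤ} be a stationary sequence of random elements of 𝒯 satisfying T_i = T_{ε_i} ∘ S ∘ [𝛂 T_{i−1}] for all i, where S ∈ 𝒯, 𝛂 ∈ (−1,1), and (T_{ε_i})_{i∈ℤ} are i.i.d. random elements of 𝒯, each independent of (T_j)_{j<i}, with E[T_{ε_i}(y)] = y for all y ∈ [0,1]. For α ∈ [−1,1] define S_α(x) = E[(T_i ∘ [α T_{i−1}]⁻¹)(x)] and M(α) = E‖S_α ∘ [α T_{i−1}] − T_i‖₂². Then the true parameter 𝛂 minimizes M: M(𝛂) ≤ M(α)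 for every α ∈ [−1,1]. -/
open MeasureTheory ProbabilityTheory

noncomputable section

/-- The inverse bijection of `T ∈ 𝒯` (on `[0,1]`). -/
def tinv (T : ℝ → ℝ) : ℝ → ℝ := Function.invFunOn T (Set.Icc 0 1)

/-- The α-contraction `[αT]`. -/
def contr (α : ℝ) (T : ℝ → ℝ) (x : ℝ) : ℝ :=
  if 0 ≤ α then x + α * (T x - x) else x + α * (x - tinv T x)

/-- The population map `S_α(x) = E[(T_i ∘ [α T_{i−1}]⁻¹)(x)]` (computed at `i = 1`). -/
def Salpha {Ω : Type*} [MeasurableSpace Ω] (P : Measure Ω)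
    (T : ℤ → Ω → ℝ → ℝ) (α x : ℝ) : ℝ :=
  ∫ ω, T 1 ω (tinv (contr α (T 0 ω)) x) ∂P

/-- The population objective `M(α) = E‖S_α ∘ [α T_{i−1}] − T_i‖₂²` (computed at `i = 1`). -/
def Mobj {Ω : Type*} [MeasurableSpace Ω] (P : Measure Ω)
    (T : ℤ → Ω → ℝ → ℝ) (α : ℝ) : ℝ :=
  ∫ ω, (∫ x in (0:ℝ)..1, (Salpha P T α (contr α (T 0 ω) x) - T 1 ω x)^2) ∂P

open Set Filter

namespace AuxStat

lemma inT_surjOn {T : ℝ → ℝ} (h : InT T) : SurjOn T (Icc 0 1) (Icc 0 1) := by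
  have h2 := intermediate_value_Icc (zero_le_one (α := ℝ)) h.1
  rwa [h.2.2.2.1, h.2.2.2.2] at h2

lemma tinv_mem {T : ℝ → ℝ} (h : InT T) {x : ℝ} (hx : x ∈ Icc (0:ℝ) 1) :
    tinv T x ∈ Icc (0:ℝ) 1 := by
  obtain ⟨a, ha, hax⟩ := inT_surjOn h hx
  exact Function.invFunOn_mem ⟨a, ha, hax⟩

lemma tinv_right {T : ℝ → ℝ} (h : InT T) {x : ℝ} (hx : x ∈ Icc (0:ℝ) 1) :
    T (tinv T x) = x := by
  obtain ⟨a, ha, hax⟩ := inT_surjOn h hx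
  exact Function.invFunOn_eq ⟨a, ha, hax⟩

lemma tinv_left {T : ℝ → ℝ} (h : InT T) {x : ℝ} (hx : x ∈ Icc (0:ℝ) 1) :
    tinv T (T x) = x := h.2.1.injOn.leftInvOn_invFunOn hx

lemma tinv_strictMonoOn {T : ℝ → ℝ} (h : InT T) : StrictMonoOn (tinv T) (Icc 0 1) := by
  intro x hx y hy hxy
  by_contra hle
  push_neg at hle
  have := h.2.1.monotoneOn (tinv_mem h hy) (tinv_mem h hx) hle
  rw [tinv_right h hx, tinv_right h hy] at this
  exact absurd this (not_le.2 hxy)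

lemma continuousOn_of_strictMonoOn_surjOn {f : ℝ → ℝ} (hm : StrictMonoOn f (Icc 0 1))
    (hmaps : MapsTo f (Icc 0 1) (Icc 0 1)) (hs : SurjOn f (Icc 0 1) (Icc 0 1))
    (h0 : f 0 = 0) (h1 : f 1 = 1) : ContinuousOn f (Icc 0 1) := by
  intro a ha
  have h01 : (0:ℝ) ∈ Icc (0:ℝ) 1 := by norm_num
  have h11 : (1:ℝ) ∈ Icc (0:ℝ) 1 := by norm_num
  have hfa := hmaps ha
  have hright : ContinuousWithinAt f (Icc a 1) a := by
    rcases eq_or_lt_of_le ha.2 with heq | hlt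
    · rw [heq, Icc_self]
      exact continuousWithinAt_singleton
    · refine ContinuousWithinAt.mono ?_ (Icc_subset_Ici_self)
      refine hm.continuousWithinAt_right_of_exists_between (Icc_mem_nhdsGE_of_mem ⟨ha.1, hlt⟩) ?_
      intro b hb
      have hfa1 : f a < 1 := by
        have := hm ha h11 hlt
        rwa [h1] at this
      set y := (f a + min b 1) / 2 with hy
      have hminy : f a < min b 1 := lt_min hb hfa1
      have hy1 : f a < y := by rw [hy]; linarith
      have hy2 : y < min b 1 := by rw [hy]; linarith
      obtain ⟨c, hc, hfc⟩ := hs (⟨le_trans hfa.1 hy1.le, le_trans hy2.le (min_le_right _ _)⟩ :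
        y ∈ Icc (0:ℝ) 1)
      exact ⟨c, hc, by rw [hfc]; exact ⟨hy1, le_trans hy2.le (min_le_left _ _)⟩⟩
  have hleft : ContinuousWithinAt f (Icc 0 a) a := by
    rcases eq_or_lt_of_le ha.1 with heq | hlt
    · rw [← heq, Icc_self]
      exact continuousWithinAt_singleton
    · refine ContinuousWithinAt.mono ?_ (Icc_subset_Iic_self)
      refine hm.continuousWithinAt_left_of_exists_between (Icc_mem_nhdsLE_of_mem ⟨hlt, ha.2⟩) ?_
      intro b hb
      have hfa0 : 0 < f a := by
        have := hm h01 ha hlt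
        rwa [h0] at this
      set y := (max b 0 + f a) / 2 with hy
      have hminy : max b 0 < f a := max_lt hb hfa0
      have hy1 : y < f a := by rw [hy]; linarith
      have hy2 : max b 0 < y := by rw [hy]; linarith
      obtain ⟨c, hc, hfc⟩ := hs (⟨le_trans (le_max_right _ _) hy2.le, le_trans hy1.le hfa.2⟩ :
        y ∈ Icc (0:ℝ) 1)
      exact ⟨c, hc, by rw [hfc]; exact ⟨le_trans (le_max_left _ _) hy2.le, hy1⟩⟩
  have := hleft.union hright
  rwa [Icc_union_Icc_eq_Icc ha.1 ha.2] at this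

lemma inT_tinv {T : ℝ → ℝ} (h : InT T) : InT (tinv T) := by
  have h0 : tinv T 0 = 0 := by
    have := tinv_left h (x := 0) (by norm_num)
    rwa [h.2.2.2.1] at this
  have h1 : tinv T 1 = 1 := by
    have := tinv_left h (x := 1) (by norm_num)
    rwa [h.2.2.2.2] at this
  have hmaps : MapsTo (tinv T) (Icc 0 1) (Icc 0 1) := fun x hx => tinv_mem h hx
  have hsurj : SurjOn (tinv T) (Icc 0 1) (Icc 0 1) := by
    intro y hy
    exact ⟨T y, h.2.2.1 hy, tinv_left h hy⟩
  exact ⟨continuousOn_of_strictMonoOn_surjOn (tinv_strictMonoOn h) hmaps hsurj h0 h1,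
    tinv_strictMonoOn h, hmaps, h0, h1⟩

lemma contr_zero {α : ℝ} {T : ℝ → ℝ} (h : InT T) : contr α T 0 = 0 := by
  unfold contr
  split_ifs
  · rw [h.2.2.2.1]; ring
  · have h0 : tinv T 0 = 0 := (inT_tinv h).2.2.2.1
    rw [h0]; ring

lemma contr_one {α : ℝ} {T : ℝ → ℝ} (h : InT T) : contr α T 1 = 1 := by
  unfold contr
  split_ifs
  · rw [h.2.2.2.2]; ring
  · have h1 : tinv T 1 = 1 := (inT_tinv h).2.2.2.2
    rw [h1]; ring

lemma contr_mem {α : ℝ} {T : ℝ → ℝ} (hα : α ∈ Icc (-1:ℝ) 1) (h : InT T)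
    {x : ℝ} (hx : x ∈ Icc (0:ℝ) 1) : contr α T x ∈ Icc (0:ℝ) 1 := by
  unfold contr
  split_ifs with hpos
  · have hTx := h.2.2.1 hx
    constructor <;> nlinarith [hx.1, hx.2, hTx.1, hTx.2, hα.2]
  · have hTx := tinv_mem h hx
    push_neg at hpos
    constructor <;> nlinarith [hx.1, hx.2, hTx.1, hTx.2, hα.1]

lemma contr_strictMonoOn {α : ℝ} {T : ℝ → ℝ} (hα : α ∈ Icc (-1:ℝ) 1) (h : InT T) :
    StrictMonoOn (contr α T) (Icc 0 1) := by
  intro x hx y hy hxy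
  unfold contr
  split_ifs with hpos
  · have hT := h.2.1 hx hy hxy
    rcases eq_or_lt_of_le hα.2 with heq | hlt
    · rw [heq]; nlinarith
    · nlinarith
  · push_neg at hpos
    have hT := tinv_strictMonoOn h hx hy hxy
    nlinarith [hα.1]

lemma inT_contr {α : ℝ} {T : ℝ → ℝ} (hα : α ∈ Icc (-1:ℝ) 1) (h : InT T) :
    InT (contr α T) := by
  have hmono := contr_strictMonoOn hα h
  have hmaps : MapsTo (contr α T) (Icc 0 1) (Icc 0 1) := fun x hx => contr_mem hα h hx
  have h0 := contr_zero (α := α) h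
  have h1 := contr_one (α := α) h
  have hcont : ContinuousOn (contr α T) (Icc 0 1) := by
    unfold contr
    split_ifs
    · exact (continuousOn_id.add (continuousOn_const.mul (h.1.sub continuousOn_id)))
    · exact (continuousOn_id.add (continuousOn_const.mul (continuousOn_id.sub (inT_tinv h).1)))
  exact ⟨hcont, hmono, hmaps, h0, h1⟩



lemma tinv_eq_ciSup {T : ℝ → ℝ} (h : InT T) {x : ℝ} (hx : x ∈ Icc (0:ℝ) 1) :
    tinv T x = ⨆ q : ℚ, (if (q:ℝ) ∈ Icc (0:ℝ) 1 ∧ T q ≤ x then (q:ℝ) else 0) := by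
  set g : ℚ → ℝ := fun q => if (q:ℝ) ∈ Icc (0:ℝ) 1 ∧ T q ≤ x then (q:ℝ) else 0 with hg
  have htx := tinv_mem h hx
  have hub : ∀ q, g q ≤ tinv T x := by
    intro q
    simp only [hg]
    split_ifs with hcond
    · by_contra hlt
      push_neg at hlt
      have := h.2.1 htx hcond.1 hlt
      rw [tinv_right h hx] at this
      exact absurd hcond.2 (not_le.2 this)
    · exact htx.1
  have hbdd : BddAbove (Set.range g) := ⟨tinv T x, by rintro _ ⟨q, rfl⟩; exact hub q⟩
  refine le_antisymm ?_ (ciSup_le hub)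
  by_contra hlt
  push_neg at hlt
  have hg0 : (0:ℝ) ≤ ⨆ q, g q := by
    have : g 0 ≤ ⨆ q, g q := le_ciSup hbdd 0
    have hg00 : g 0 = 0 := by
      simp only [hg]
      simp only [Rat.cast_zero]
      rw [if_pos ⟨by norm_num, by rw [h.2.2.2.1]; exact hx.1⟩]
    linarith [this, hg00.symm.le]
  obtain ⟨q, hq1, hq2⟩ := exists_rat_btwn hlt
  have hq0 : (0:ℝ) < q := lt_of_le_of_lt hg0 hq1
  have hqm : (q:ℝ) ∈ Icc (0:ℝ) 1 := ⟨hq0.le, le_trans hq2.le htx.2⟩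
  have hTq : T q ≤ x := by
    have := h.2.1.monotoneOn hqm htx hq2.le
    rwa [tinv_right h hx] at this
  have : g q = (q:ℝ) := by simp only [hg]; exact if_pos ⟨hqm, hTq⟩
  have := le_ciSup hbdd q
  rw [‹g q = (q:ℝ)›] at this
  exact absurd (lt_of_lt_of_le hq1 this) (lt_irrefl _)

lemma eval_eq_ciSup {F : ℝ → ℝ} (hm : MonotoneOn F (Icc 0 1)) (hc : ContinuousOn F (Icc 0 1))
    {v : ℝ} (hv : v ∈ Icc (0:ℝ) 1) :
    F v = ⨆ q : ℚ, (if (q:ℝ) ∈ Icc (0:ℝ) 1 ∧ (q:ℝ) ≤ v then F q else F 0) := by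
  set g : ℚ → ℝ := fun q => if (q:ℝ) ∈ Icc (0:ℝ) 1 ∧ (q:ℝ) ≤ v then F q else F 0 with hg
  have h01 : (0:ℝ) ∈ Icc (0:ℝ) 1 := by norm_num
  have hub : ∀ q, g q ≤ F v := by
    intro q
    simp only [hg]
    split_ifs with hcond
    · exact hm hcond.1 hv hcond.2
    · exact hm h01 hv hv.1
  have hbdd : BddAbove (Set.range g) := ⟨F v, by rintro _ ⟨q, rfl⟩; exact hub q⟩
  refine le_antisymm ?_ (ciSup_le hub)
  rcases eq_or_lt_of_le hv.1 with heq | hpos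
  · have : g 0 = F v := by
      simp only [hg]; simp only [Rat.cast_zero]
      rw [if_pos ⟨h01, by rw [← heq]⟩, ← heq]
    calc F v = g 0 := this.symm
    _ ≤ _ := le_ciSup hbdd 0
  by_contra hlt
  push_neg at hlt
  set ε := F v - ⨆ q, g q with hε
  have hεpos : 0 < ε := by rw [hε]; linarith
  have hcw : ContinuousWithinAt F (Icc 0 1) v := hc.continuousWithinAt hv
  rw [Metric.continuousWithinAt_iff] at hcw
  obtain ⟨δ, hδpos, hδ⟩ := hcw ε hεpos
  obtain ⟨q, hq1, hq2⟩ := exists_rat_btwn (show max (v - δ) 0 < v from max_lt (by linarith) hpos)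
  have hqm : (q:ℝ) ∈ Icc (0:ℝ) 1 :=
    ⟨le_trans (le_max_right _ _) hq1.le, le_trans hq2.le hv.2⟩
  have hdist : dist (q:ℝ) v < δ := by
    rw [Real.dist_eq, abs_sub_lt_iff]
    constructor
    · linarith [hq2]
    · have := lt_of_le_of_lt (le_max_left (v - δ) 0) hq1
      linarith
  have hFq := hδ hqm hdist
  rw [Real.dist_eq, abs_sub_lt_iff] at hFq
  have : g q = F q := by simp only [hg]; exact if_pos ⟨hqm, hq2.le⟩
  have hle := le_ciSup hbdd q
  rw [this] at hle
  have : F q > F v - ε := by linarith [hFq.2]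
  rw [hε] at this
  linarith

section Meas

variable {Ω : Type*}

lemma measurable_tinv_eval {m' : MeasurableSpace Ω} {F : Ω → ℝ → ℝ} (hF : ∀ ω, InT (F ω))
    (hmeas : ∀ y ∈ Icc (0:ℝ) 1, Measurable[m'] fun ω => F ω y) {x : ℝ}
    (hx : x ∈ Icc (0:ℝ) 1) : Measurable[m'] fun ω => tinv (F ω) x := by
  have heq : ∀ ω, tinv (F ω) x
      = ⨆ q : ℚ, (if (q:ℝ) ∈ Icc (0:ℝ) 1 ∧ F ω q ≤ x then (q:ℝ) else 0) :=
    fun ω => tinv_eq_ciSup (hF ω) hx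
  simp_rw [heq]
  refine Measurable.iSup fun q => ?_
  by_cases hq : (q:ℝ) ∈ Icc (0:ℝ) 1
  · simp only [hq, true_and]
    exact Measurable.ite ((hmeas _ hq) measurableSet_Iic) measurable_const measurable_const
  · simp only [hq, false_and, if_false]
    exact measurable_const

lemma measurable_eval_comp {m' : MeasurableSpace Ω} {F : Ω → ℝ → ℝ}
    (hmono : ∀ ω, MonotoneOn (F ω) (Icc 0 1)) (hcont : ∀ ω, ContinuousOn (F ω) (Icc 0 1))
    (hmeas : ∀ y ∈ Icc (0:ℝ) 1, Measurable[m'] fun ω => F ω y) {v : Ω → ℝ}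
    (hv : Measurable[m'] v) (hv1 : ∀ ω, v ω ∈ Icc (0:ℝ) 1) :
    Measurable[m'] fun ω => F ω (v ω) := by
  have heq : ∀ ω, F ω (v ω)
      = ⨆ q : ℚ, (if (q:ℝ) ∈ Icc (0:ℝ) 1 ∧ (q:ℝ) ≤ v ω then F ω q else F ω 0) :=
    fun ω => eval_eq_ciSup (hmono ω) (hcont ω) (hv1 ω)
  simp_rw [heq]
  refine Measurable.iSup fun q => ?_
  have h0 : Measurable[m'] fun ω => F ω 0 := hmeas 0 (by norm_num)
  by_cases hq : (q:ℝ) ∈ Icc (0:ℝ) 1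
  · simp only [hq, true_and]
    exact Measurable.ite (hv measurableSet_Ici) (hmeas _ hq) h0
  · simp only [hq, false_and, if_false]
    exact h0

end Meas


lemma abs_le_one_of_mem {y : ℝ} (hy : y ∈ Icc (0:ℝ) 1) : |y| ≤ 1 :=
  abs_le.2 ⟨by linarith [hy.1], hy.2⟩

lemma integrable_of_bound {Ω : Type*} {mΩ : MeasurableSpace Ω} {P : Measure Ω}
    [IsFiniteMeasure P] (f : Ω → ℝ) (C : ℝ) (hf : AEStronglyMeasurable f P)
    (hb : ∀ ω, |f ω| ≤ C) : Integrable f P :=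
  (integrable_const C).mono' hf (Filter.Eventually.of_forall fun ω => by
    rw [Real.norm_eq_abs]; exact hb ω)

lemma cross_zero {Ω : Type*} {mΩ : MeasurableSpace Ω} (P : Measure Ω) [IsProbabilityMeasure P]
    (E : Ω → ℝ → ℝ) (hE : ∀ ω, InT (E ω)) (hEmeas : Measurable[mΩ] E)
    (hEmean : ∀ y ∈ Icc (0:ℝ) 1, ∫ ω, E ω y ∂P = y)
    (𝒢 : MeasurableSpace Ω) (h𝒢 : 𝒢 ≤ mΩ)
    (hInd : Indep 𝒢 (MeasurableSpace.comap E MeasurableSpace.pi) P)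
    (u v : Ω → ℝ) (hu : Measurable[𝒢] u) (hub : ∀ ω, |u ω| ≤ 2)
    (hv : Measurable[𝒢] v) (hv1 : ∀ ω, v ω ∈ Icc (0:ℝ) 1) :
    ∫ ω, u ω * (v ω - E ω (v ω)) ∂P = 0 := by
  have hEev : ∀ y, Measurable[mΩ] fun ω => E ω y := fun y => (measurable_pi_apply y).comp hEmeas
  have hu' : Measurable[mΩ] u := hu.mono h𝒢 le_rfl
  have hv' : Measurable[mΩ] v := hv.mono h𝒢 le_rfl
  have hEmono : ∀ ω, MonotoneOn (E ω) (Icc 0 1) := fun ω => (hE ω).2.1.monotoneOn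
  have hEcont : ∀ ω, ContinuousOn (E ω) (Icc 0 1) := fun ω => (hE ω).1
  have hEmem : ∀ ω {y : ℝ}, y ∈ Icc (0:ℝ) 1 → E ω y ∈ Icc (0:ℝ) 1 :=
    fun ω {y} hy => (hE ω).2.2.1 hy
  have hEv_meas : Measurable[mΩ] fun ω => E ω (v ω) :=
    measurable_eval_comp hEmono hEcont (fun y _ => hEev y) hv' hv1
  have h0m : (0:ℝ) ∈ Icc (0:ℝ) 1 := ⟨le_refl 0, zero_le_one⟩
  let σ : ℕ → @SimpleFunc Ω 𝒢 ℝ := fun n => SimpleFunc.approxOn v hv (Icc 0 1) 0 h0m n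
  have hσmem : ∀ n ω, σ n ω ∈ Icc (0:ℝ) 1 := fun n ω => SimpleFunc.approxOn_mem hv h0m n ω
  have hσtend : ∀ ω, Filter.Tendsto (fun n => σ n ω) Filter.atTop (nhds (v ω)) := fun ω =>
    SimpleFunc.tendsto_approxOn hv h0m (by rw [isClosed_Icc.closure_eq]; exact hv1 ω)
  have hσG : ∀ n, Measurable[𝒢] (σ n) := fun n => (σ n).measurable
  have hσ' : ∀ n, Measurable[mΩ] (σ n) := fun n => (hσG n).mono h𝒢 le_rfl
  have hEσ_meas : ∀ n, Measurable[mΩ] fun ω => E ω (σ n ω) := fun n =>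
    measurable_eval_comp hEmono hEcont (fun y _ => hEev y) (hσ' n) (hσmem n)
  have step_simple : ∀ n, ∫ ω, u ω * E ω (σ n ω) ∂P = ∫ ω, u ω * σ n ω ∂P := by
    intro n
    have hdecomp1 : ∀ ω, u ω * E ω (σ n ω)
        = ∑ c ∈ (σ n).range, (if σ n ω = c then u ω else 0) * E ω c := by
      intro ω
      have h1 : ∀ c, (if σ n ω = c then u ω else 0) * E ω c
          = (if σ n ω = c then u ω * E ω c else 0) := by
        intro c; split_ifs <;> ring
      simp_rw [h1]
      rw [Finset.sum_ite_eq ((σ n).range) (σ n ω) (fun c => u ω * E ω c),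
        if_pos (SimpleFunc.mem_range_self _ _)]
    have hdecomp2 : ∀ ω, u ω * σ n ω
        = ∑ c ∈ (σ n).range, (if σ n ω = c then u ω else 0) * c := by
      intro ω
      have h1 : ∀ c, (if σ n ω = c then u ω else 0) * c
          = (if σ n ω = c then u ω * c else 0) := by
        intro c; split_ifs <;> ring
      simp_rw [h1]
      rw [Finset.sum_ite_eq ((σ n).range) (σ n ω) (fun c => u ω * c),
        if_pos (SimpleFunc.mem_range_self _ _)]
    simp_rw [hdecomp1, hdecomp2]
    have hXG : ∀ c : ℝ, Measurable[𝒢] fun ω => if σ n ω = c then u ω else 0 := by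
      intro c
      exact Measurable.ite ((hσG n) (measurableSet_singleton c)) hu measurable_const
    have hX : ∀ c : ℝ, Measurable[mΩ] fun ω => if σ n ω = c then u ω else 0 := fun c =>
      (hXG c).mono h𝒢 le_rfl
    have hXb : ∀ c ω, |if σ n ω = c then u ω else 0| ≤ 2 := by
      intro c ω; split_ifs with h
      · exact hub ω
      · simp
    have hb1 : ∀ c ω, |(if σ n ω = c then u ω else 0) * E ω c| ≤ 2 := by
      intro c ω
      rw [abs_mul]
      by_cases hc : c ∈ Icc (0:ℝ) 1
      · have := abs_le_one_of_mem (hEmem ω hc)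
        nlinarith [hXb c ω, abs_nonneg (if σ n ω = c then u ω else 0), abs_nonneg (E ω c)]
      · by_cases h : σ n ω = c
        · exact absurd (h ▸ hσmem n ω) hc
        · simp [h]
    have hb2 : ∀ c ω, c ∈ Icc (0:ℝ) 1 → |(if σ n ω = c then u ω else 0) * c| ≤ 2 := by
      intro c ω hc
      rw [abs_mul]
      have := abs_le_one_of_mem hc
      nlinarith [hXb c ω, abs_nonneg (if σ n ω = c then u ω else 0), abs_nonneg c]
    have hcmemr : ∀ c ∈ (σ n).range, c ∈ Icc (0:ℝ) 1 := by
      intro c hc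
      obtain ⟨ω₀, hω₀⟩ := SimpleFunc.mem_range.1 hc
      exact hω₀ ▸ hσmem n ω₀
    rw [integral_finset_sum _ (fun c _ => integrable_of_bound
        (fun ω => (if σ n ω = c then u ω else 0) * E ω c) 2
        (((hX c).mul (hEev c)).aestronglyMeasurable) (hb1 c)),
      integral_finset_sum _ (fun c hc => integrable_of_bound
        (fun ω => (if σ n ω = c then u ω else 0) * c) 2
        (((hX c).mul measurable_const).aestronglyMeasurable) (fun ω => hb2 c ω (hcmemr c hc)))]
    refine Finset.sum_congr rfl fun c hc => ?_
    have hcmem : c ∈ Icc (0:ℝ) 1 := hcmemr c hc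
    have hEcG : Measurable[MeasurableSpace.comap E MeasurableSpace.pi] fun ω => E ω c :=
      (measurable_pi_apply c).comp (Measurable.of_comap_le le_rfl)
    have hIndXY : IndepFun (fun ω => if σ n ω = c then u ω else 0) (fun ω => E ω c) P := by
      rw [IndepFun_iff_Indep]
      exact indep_of_indep_of_le_left
        (indep_of_indep_of_le_right hInd hEcG.comap_le) (hXG c).comap_le
    have h1 := hIndXY.integral_fun_mul_eq_mul_integral
      (integrable_of_bound _ 2 (hX c).aestronglyMeasurable (hXb c)).aestronglyMeasurable
      (integrable_of_bound _ 1 (hEev c).aestronglyMeasurable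
        (fun ω => abs_le_one_of_mem (hEmem ω hcmem))).aestronglyMeasurable
    have h2 : ∫ ω, (if σ n ω = c then u ω else 0) * E ω c ∂P
        = (∫ ω, (if σ n ω = c then u ω else 0) ∂P) * ∫ ω, E ω c ∂P := h1
    rw [h2, hEmean c hcmem, ← integral_mul_const]
  -- pass to the limit
  have hbound_uE : ∀ (g : Ω → ℝ), (∀ ω, g ω ∈ Icc (0:ℝ) 1) → ∀ ω, ‖u ω * g ω‖ ≤ 2 := by
    intro g hg ω
    rw [Real.norm_eq_abs, abs_mul]
    have h1 := abs_le_one_of_mem (hg ω)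
    nlinarith [hub ω, abs_nonneg (u ω), abs_nonneg (g ω)]
  have lim1 : Filter.Tendsto (fun n => ∫ ω, u ω * E ω (σ n ω) ∂P) Filter.atTop
      (nhds (∫ ω, u ω * E ω (v ω) ∂P)) := by
    apply tendsto_integral_of_dominated_convergence (fun _ => (2:ℝ))
    · exact fun n => (hu'.mul (hEσ_meas n)).aestronglyMeasurable
    · exact integrable_const 2
    · exact fun n => Filter.Eventually.of_forall fun ω =>
        hbound_uE _ (fun ω => hEmem ω (hσmem n ω)) ω
    · refine Filter.Eventually.of_forall fun ω => ?_
      have hcw : ContinuousWithinAt (E ω) (Icc 0 1) (v ω) :=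
        (hEcont ω).continuousWithinAt (hv1 ω)
      have hconv : Filter.Tendsto (fun n => E ω (σ n ω)) Filter.atTop (nhds (E ω (v ω))) := by
        apply hcw.tendsto.comp
        exact tendsto_nhdsWithin_iff.2 ⟨hσtend ω, Filter.Eventually.of_forall fun n => hσmem n ω⟩
      exact hconv.const_mul (u ω)
  have lim2 : Filter.Tendsto (fun n => ∫ ω, u ω * σ n ω ∂P) Filter.atTop
      (nhds (∫ ω, u ω * v ω ∂P)) := by
    apply tendsto_integral_of_dominated_convergence (fun _ => (2:ℝ))
    · exact fun n => (hu'.mul (hσ' n)).aestronglyMeasurable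
    · exact integrable_const 2
    · exact fun n => Filter.Eventually.of_forall fun ω => hbound_uE _ (hσmem n) ω
    · exact Filter.Eventually.of_forall fun ω => (hσtend ω).const_mul (u ω)
  have hkey : ∫ ω, u ω * E ω (v ω) ∂P = ∫ ω, u ω * v ω ∂P := by
    refine tendsto_nhds_unique ?_ lim2
    exact (funext step_simple : (fun n => ∫ ω, u ω * E ω (σ n ω) ∂P) = _) ▸ lim1
  have int_uv : Integrable (fun ω => u ω * v ω) P :=
    integrable_of_bound _ 2 (hu'.mul hv').aestronglyMeasurable
      (fun ω => by rw [← Real.norm_eq_abs]; exact hbound_uE v hv1 ω)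
  have int_uEv : Integrable (fun ω => u ω * E ω (v ω)) P :=
    integrable_of_bound _ 2 (hu'.mul hEv_meas).aestronglyMeasurable
      (fun ω => by rw [← Real.norm_eq_abs]; exact hbound_uE _ (fun ω => hEmem ω (hv1 ω)) ω)
  calc ∫ ω, u ω * (v ω - E ω (v ω)) ∂P
      = ∫ ω, (u ω * v ω - u ω * E ω (v ω)) ∂P := by simp_rw [mul_sub]
    _ = (∫ ω, u ω * v ω ∂P) - ∫ ω, u ω * E ω (v ω) ∂P := integral_sub int_uv int_uEv
    _ = 0 := by rw [hkey]; ring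

section Meas2

variable {Ω : Type*}

lemma measurable_contr_eval {m' : MeasurableSpace Ω} {F : Ω → ℝ → ℝ} (hF : ∀ ω, InT (F ω))
    (hmeas : ∀ y ∈ Icc (0:ℝ) 1, Measurable[m'] fun ω => F ω y) (β : ℝ) {y : ℝ}
    (hy : y ∈ Icc (0:ℝ) 1) : Measurable[m'] fun ω => contr β (F ω) y := by
  unfold contr
  split_ifs with h
  · exact measurable_const.add (measurable_const.mul ((hmeas y hy).sub measurable_const))
  · exact measurable_const.add
      (measurable_const.mul (measurable_const.sub (measurable_tinv_eval hF hmeas hy)))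

lemma measurable_tinv_contr_eval {m' : MeasurableSpace Ω} {F : Ω → ℝ → ℝ} {β : ℝ}
    (hβ : β ∈ Icc (-1:ℝ) 1) (hF : ∀ ω, InT (F ω))
    (hmeas : ∀ y ∈ Icc (0:ℝ) 1, Measurable[m'] fun ω => F ω y) {x : ℝ}
    (hx : x ∈ Icc (0:ℝ) 1) : Measurable[m'] fun ω => tinv (contr β (F ω)) x :=
  measurable_tinv_eval (fun ω => inT_contr hβ (hF ω))
    (fun y hy => measurable_contr_eval hF hmeas β hy) hx

end Meas2

def clamp (x : ℝ) : ℝ := max 0 (min 1 x)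

lemma clamp_mem (x : ℝ) : clamp x ∈ Icc (0:ℝ) 1 :=
  ⟨le_max_left _ _, max_le zero_le_one (min_le_left _ _)⟩

lemma clamp_eq {x : ℝ} (hx : x ∈ Icc (0:ℝ) 1) : clamp x = x := by
  unfold clamp
  rw [min_eq_right hx.2, max_eq_right hx.1]

lemma continuous_clamp : Continuous clamp :=
  continuous_const.max (continuous_const.min continuous_id)

lemma jointSM {Ω : Type*} {mΩ : MeasurableSpace Ω} {f : Ω → ℝ → ℝ}
    (hx : ∀ ω, Continuous fun x => f ω x) (hω : ∀ x, Measurable[mΩ] fun ω => f ω x) :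
    StronglyMeasurable (fun p : Ω × ℝ => f p.1 p.2) := by
  have h := stronglyMeasurable_uncurry_of_continuous_of_stronglyMeasurable
    (u := fun x ω => f ω x) hx (fun x => (hω x).stronglyMeasurable)
  exact h.comp_measurable measurable_swap

section SalphaProps

variable {Ω : Type*} {mΩ : MeasurableSpace Ω} (P : Measure Ω) [IsProbabilityMeasure P]
  (T : ℤ → Ω → ℝ → ℝ)

lemma salpha_integrand_meas (hT : ∀ i ω, InT (T i ω)) (hTmeas : ∀ i, Measurable (T i))
    {β : ℝ} (hβ : β ∈ Icc (-1:ℝ) 1) {x : ℝ} (hx : x ∈ Icc (0:ℝ) 1) :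
    Measurable[mΩ] fun ω => T 1 ω (tinv (contr β (T 0 ω)) x) := by
  have hev : ∀ i y, Measurable fun ω => T i ω y := fun i y =>
    (measurable_pi_apply y).comp (hTmeas i)
  exact measurable_eval_comp (fun ω => (hT 1 ω).2.1.monotoneOn) (fun ω => (hT 1 ω).1)
    (fun y _ => hev 1 y)
    (measurable_tinv_contr_eval hβ (fun ω => hT 0 ω) (fun y _ => hev 0 y) hx)
    (fun ω => tinv_mem (inT_contr hβ (hT 0 ω)) hx)

lemma salpha_props (hT : ∀ i ω, InT (T i ω)) (hTmeas : ∀ i, Measurable (T i))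
    {β : ℝ} (hβ : β ∈ Icc (-1:ℝ) 1) :
    (∀ x ∈ Icc (0:ℝ) 1, Salpha P T β x ∈ Icc (0:ℝ) 1) ∧
      MonotoneOn (Salpha P T β) (Icc 0 1) ∧ ContinuousOn (Salpha P T β) (Icc 0 1) := by
  have hint_mem : ∀ ω, ∀ x ∈ Icc (0:ℝ) 1, T 1 ω (tinv (contr β (T 0 ω)) x) ∈ Icc (0:ℝ) 1 :=
    fun ω x hx => (hT 1 ω).2.2.1 (tinv_mem (inT_contr hβ (hT 0 ω)) hx)
  have hint : ∀ x ∈ Icc (0:ℝ) 1,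
      Integrable (fun ω => T 1 ω (tinv (contr β (T 0 ω)) x)) P := fun x hx =>
    integrable_of_bound _ 1 (salpha_integrand_meas T hT hTmeas hβ hx).aestronglyMeasurable
      (fun ω => abs_le_one_of_mem (hint_mem ω x hx))
  refine ⟨?_, ?_, ?_⟩
  · intro x hx
    constructor
    · exact integral_nonneg fun ω => (hint_mem ω x hx).1
    · calc Salpha P T β x ≤ ∫ _, (1:ℝ) ∂P :=
          integral_mono (hint x hx) (integrable_const 1) fun ω => (hint_mem ω x hx).2
        _ = 1 := by simp
  · intro x hx y hy hxy
    refine integral_mono (hint x hx) (hint y hy) fun ω => ?_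
    have hC := inT_contr hβ (hT 0 ω)
    exact (hT 1 ω).2.1.monotoneOn (tinv_mem hC hx) (tinv_mem hC hy)
      ((tinv_strictMonoOn hC).monotoneOn hx hy hxy)
  · intro x hx
    apply continuousWithinAt_of_dominated
      (bound := fun _ => (1:ℝ))
      (F := fun x ω => T 1 ω (tinv (contr β (T 0 ω)) x))
    · filter_upwards [self_mem_nhdsWithin] with y hy
      exact (salpha_integrand_meas T hT hTmeas hβ hy).aestronglyMeasurable
    · filter_upwards [self_mem_nhdsWithin] with y hy
      exact Filter.Eventually.of_forall fun ω => by
        rw [Real.norm_eq_abs]; exact abs_le_one_of_mem (hint_mem ω y hy)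
    · exact integrable_const 1
    · refine Filter.Eventually.of_forall fun ω => ?_
      have hC := inT_contr hβ (hT 0 ω)
      have h1 : ContinuousOn (fun y => tinv (contr β (T 0 ω)) y) (Icc 0 1) := (inT_tinv hC).1
      have h2 := (hT 1 ω).1.comp h1 (fun y hy => tinv_mem hC hy)
      exact h2.continuousWithinAt hx

end SalphaProps

end AuxStat

open AuxStat Set Filter in
/-- for the stationary autoregressive system
`T_i = T_{ε_i} ∘ S ∘ [𝛂 T_{i−1}]`, the true parameter `𝛂` minimizes `M` on `[−1,1]`. -/
theorem true_alpha_minimizes {Ω : Type*} [MeasurableSpace Ω]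
    (P : Measure Ω) [IsProbabilityMeasure P]
    (S : ℝ → ℝ) (hS : InT S) (a0 : ℝ) (ha0 : a0 ∈ Set.Ioo (-1 : ℝ) 1)
    (T Tε : ℤ → Ω → ℝ → ℝ)
    (hT : ∀ i ω, InT (T i ω)) (hTε : ∀ i ω, InT (Tε i ω))
    (hTmeas : ∀ i, Measurable (T i)) (hTεmeas : ∀ i, Measurable (Tε i))
    -- the autoregressive model equation
    (hmodel : ∀ i ω, ∀ x ∈ Set.Icc (0:ℝ) 1, T i ω x = Tε i ω (S (contr a0 (T (i-1) ω) x)))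
    -- the noise maps are i.i.d. ...
    (hid : ∀ i j, Measure.map (Tε i) P = Measure.map (Tε j) P)
    (hindep_noise : iIndepFun Tε P)
    -- ... each independent of the past of the chain ...
    (hindep_past : ∀ i : ℤ, IndepFun (fun ω => fun j : {j : ℤ // j < i} => T j.1 ω) (Tε i) P)
    -- ... and have identity mean
    (hmean : ∀ i, ∀ y ∈ Set.Icc (0:ℝ) 1, ∫ ω, Tε i ω y ∂P = y)
    -- stationarity: all pairs (T_{i-1}, T_i) have the same joint law
    (hstat : ∀ i j : ℤ, Measure.map (fun ω => (T (i-1) ω, T i ω)) P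
      = Measure.map (fun ω => (T (j-1) ω, T j ω)) P) :
    ∀ α ∈ Set.Icc (-1 : ℝ) 1, Mobj P T a0 ≤ Mobj P T α := by
  classical
  intro α hα
  have ha0' : a0 ∈ Set.Icc (-1:ℝ) 1 := ⟨ha0.1.le, ha0.2.le⟩
  have hev : ∀ (i : ℤ) (y : ℝ), Measurable fun ω => T i ω y := fun i y =>
    (measurable_pi_apply y).comp (hTmeas i)
  obtain ⟨hSbα, hSmα, hScα⟩ := salpha_props P T hT hTmeas hα
  obtain ⟨hSb0, hSm0, hSc0⟩ := salpha_props P T hT hTmeas ha0'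
  have hmodel1 : ∀ ω, ∀ x ∈ Set.Icc (0:ℝ) 1, T 1 ω x = Tε 1 ω (S (contr a0 (T 0 ω) x)) := by
    intro ω x hx
    have h := hmodel 1 ω x hx
    rwa [show (1:ℤ) - 1 = 0 by norm_num] at h
  have hSa0 : ∀ y ∈ Set.Icc (0:ℝ) 1, Salpha P T a0 y = S y := by
    intro y hy
    have heq : ∀ ω, T 1 ω (tinv (contr a0 (T 0 ω)) y) = Tε 1 ω (S y) := by
      intro ω
      have hC : InT (contr a0 (T 0 ω)) := inT_contr ha0' (hT 0 ω)
      rw [hmodel1 ω _ (tinv_mem hC hy), tinv_right hC hy]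
    calc Salpha P T a0 y = ∫ ω, Tε 1 ω (S y) ∂P :=
          integral_congr_ae (Filter.Eventually.of_forall heq)
      _ = S y := hmean 1 (S y) (hS.2.2.1 hy)
  -- measures
  set ν : Measure ℝ := volume.restrict (Set.Ioc 0 1) with hν
  haveI : IsFiniteMeasure ν :=
    ⟨by rw [hν, Measure.restrict_apply_univ, Real.volume_Ioc]; exact ENNReal.ofReal_lt_top⟩
  set μ2 : Measure (Ω × ℝ) := P.prod ν with hμ2
  haveI : IsFiniteMeasure μ2 := by rw [hμ2]; infer_instance
  -- component functions
  set f1 : Ω → ℝ → ℝ := fun ω x => Salpha P T α (contr α (T 0 ω) (clamp x)) with hf1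
  set f0 : Ω → ℝ → ℝ := fun ω x => S (contr a0 (T 0 ω) (clamp x)) with hf0
  set ft : Ω → ℝ → ℝ := fun ω x => T 1 ω (clamp x) with hft
  have hf1mem : ∀ ω x, f1 ω x ∈ Set.Icc (0:ℝ) 1 := fun ω x =>
    hSbα _ (contr_mem hα (hT 0 ω) (clamp_mem x))
  have hf0mem : ∀ ω x, f0 ω x ∈ Set.Icc (0:ℝ) 1 := fun ω x =>
    hS.2.2.1 (contr_mem ha0' (hT 0 ω) (clamp_mem x))
  have hftmem : ∀ ω x, ft ω x ∈ Set.Icc (0:ℝ) 1 := fun ω x =>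
    (hT 1 ω).2.2.1 (clamp_mem x)
  -- measurability in ω, for a generic sub-σ-algebra
  have hT0full : ∀ y ∈ Set.Icc (0:ℝ) 1, Measurable fun ω => T 0 ω y := fun y _ => hev 0 y
  have hCm : ∀ (m' : MeasurableSpace Ω),
      (∀ y ∈ Set.Icc (0:ℝ) 1, Measurable[m'] fun ω => T 0 ω y) →
      ∀ (β x : ℝ), Measurable[m'] fun ω => contr β (T 0 ω) (clamp x) :=
    fun m' h β x => measurable_contr_eval (fun ω => hT 0 ω) h β (clamp_mem x)
  set Sα : ℝ → ℝ := Salpha P T α with hSαdef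
  have hf1m : ∀ (m' : MeasurableSpace Ω),
      (∀ y ∈ Set.Icc (0:ℝ) 1, Measurable[m'] fun ω => T 0 ω y) →
      ∀ x : ℝ, Measurable[m'] fun ω => f1 ω x := fun m' h x =>
    measurable_eval_comp (F := fun _ => Sα)
      (fun _ => hSmα) (fun _ => hScα)
      (fun y _ => @measurable_const ℝ Ω inferInstance m' _) (hCm m' h α x)
      (fun ω => contr_mem hα (hT 0 ω) (clamp_mem x))
  have hf0m : ∀ (m' : MeasurableSpace Ω),
      (∀ y ∈ Set.Icc (0:ℝ) 1, Measurable[m'] fun ω => T 0 ω y) →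
      ∀ x : ℝ, Measurable[m'] fun ω => f0 ω x := fun m' h x =>
    measurable_eval_comp (F := fun _ => S)
      (fun _ => hS.2.1.monotoneOn) (fun _ => hS.1)
      (fun y _ => @measurable_const ℝ Ω inferInstance m' _) (hCm m' h a0 x) (fun ω => contr_mem ha0' (hT 0 ω) (clamp_mem x))
  have hftm : ∀ x : ℝ, Measurable fun ω => ft ω x := fun x => hev 1 _
  -- continuity in x
  have hCcont : ∀ ω (β : ℝ), β ∈ Set.Icc (-1:ℝ) 1 →
      Continuous fun x => contr β (T 0 ω) (clamp x) := fun ω β hβ =>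
    (inT_contr hβ (hT 0 ω)).1.comp_continuous continuous_clamp (fun x => clamp_mem x)
  have hf1c : ∀ ω, Continuous fun x => f1 ω x := fun ω =>
    hScα.comp_continuous (hCcont ω α hα)
      (fun x => contr_mem hα (hT 0 ω) (clamp_mem x))
  have hf0c : ∀ ω, Continuous fun x => f0 ω x := fun ω =>
    hS.1.comp_continuous (hCcont ω a0 ha0')
      (fun x => contr_mem ha0' (hT 0 ω) (clamp_mem x))
  have hftc : ∀ ω, Continuous fun x => ft ω x := fun ω =>
    (hT 1 ω).1.comp_continuous continuous_clamp (fun x => clamp_mem x)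
  -- joint measurability
  have hf1SM := jointSM hf1c (hf1m _ hT0full)
  have hf0SM := jointSM hf0c (hf0m _ hT0full)
  have hftSM := jointSM hftc hftm
  set U : Ω × ℝ → ℝ := fun p => f1 p.1 p.2 - f0 p.1 p.2 with hU
  set W : Ω × ℝ → ℝ := fun p => f0 p.1 p.2 - ft p.1 p.2 with hW
  have hUSM : StronglyMeasurable U := hf1SM.sub hf0SM
  have hWSM : StronglyMeasurable W := hf0SM.sub hftSM
  have habs : ∀ {a b : ℝ}, a ∈ Set.Icc (0:ℝ) 1 → b ∈ Set.Icc (0:ℝ) 1 → |a - b| ≤ 1 :=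
    fun {a b} ha hb => abs_le.2 ⟨by linarith [ha.1, hb.2], by linarith [ha.2, hb.1]⟩
  have hUb : ∀ p, |U p| ≤ 1 := fun p => habs (hf1mem p.1 p.2) (hf0mem p.1 p.2)
  have hWb : ∀ p, |W p| ≤ 1 := fun p => habs (hf0mem p.1 p.2) (hftmem p.1 p.2)
  have hint : ∀ (g : Ω × ℝ → ℝ), StronglyMeasurable g → (∀ p, |g p| ≤ 4) → Integrable g μ2 :=
    fun g hg hb => integrable_of_bound g 4 hg.aestronglyMeasurable hb
  have intU2 : Integrable (fun p => U p ^ 2) μ2 :=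
    hint _ (hUSM.pow 2) (fun p => by rw [abs_pow]; nlinarith [hUb p, abs_nonneg (U p)])
  have intW2 : Integrable (fun p => W p ^ 2) μ2 :=
    hint _ (hWSM.pow 2) (fun p => by rw [abs_pow]; nlinarith [hWb p, abs_nonneg (W p)])
  have intUW : Integrable (fun p => U p * W p) μ2 :=
    hint _ (hUSM.mul hWSM) (fun p => by
      rw [abs_mul]
      nlinarith [hUb p, hWb p, abs_nonneg (U p), abs_nonneg (W p)])
  have hHαb : ∀ p : Ω × ℝ, |(f1 p.1 p.2 - ft p.1 p.2) ^ 2| ≤ 4 := fun p => by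
    have h := habs (hf1mem p.1 p.2) (hftmem p.1 p.2)
    rw [abs_pow]
    nlinarith [abs_nonneg (f1 p.1 p.2 - ft p.1 p.2)]
  have hIα : Integrable (fun p : Ω × ℝ => (f1 p.1 p.2 - ft p.1 p.2) ^ 2) μ2 :=
    hint _ ((hf1SM.sub hftSM).pow 2) hHαb
  -- rewrite Mobj α
  have hMα : Mobj P T α = ∫ p, (f1 p.1 p.2 - ft p.1 p.2) ^ 2 ∂μ2 := by
    rw [hμ2, integral_prod _ (by rw [← hμ2]; exact hIα)]
    show (∫ ω, (∫ x in (0:ℝ)..1, (Salpha P T α (contr α (T 0 ω) x) - T 1 ω x)^2) ∂P) = _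
    refine integral_congr_ae (Filter.Eventually.of_forall fun ω => ?_)
    dsimp only
    rw [intervalIntegral.integral_of_le zero_le_one]
    refine integral_congr_ae ?_
    filter_upwards [ae_restrict_mem measurableSet_Ioc] with x hx
    have hxm : x ∈ Set.Icc (0:ℝ) 1 := Set.Ioc_subset_Icc_self hx
    simp only [hf1, hft, clamp_eq hxm]
    rfl
  have hM0 : Mobj P T a0 = ∫ p, W p ^ 2 ∂μ2 := by
    rw [hμ2, integral_prod _ (by rw [← hμ2]; exact intW2)]
    show (∫ ω, (∫ x in (0:ℝ)..1, (Salpha P T a0 (contr a0 (T 0 ω) x) - T 1 ω x)^2) ∂P) = _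
    refine integral_congr_ae (Filter.Eventually.of_forall fun ω => ?_)
    dsimp only
    rw [intervalIntegral.integral_of_le zero_le_one]
    refine integral_congr_ae ?_
    filter_upwards [ae_restrict_mem measurableSet_Ioc] with x hx
    have hxm : x ∈ Set.Icc (0:ℝ) 1 := Set.Ioc_subset_Icc_self hx
    simp only [hW, hf0, hft, clamp_eq hxm]
    rw [hSa0 _ (contr_mem ha0' (hT 0 ω) hxm)]
  -- decomposition
  have hsplit : ∀ p : Ω × ℝ, (f1 p.1 p.2 - ft p.1 p.2) ^ 2
      = U p ^ 2 + (2 * (U p * W p) + W p ^ 2) := by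
    intro p
    simp only [hU, hW]
    ring
  have hMα2 : Mobj P T α
      = (∫ p, U p ^ 2 ∂μ2) + (2 * (∫ p, U p * W p ∂μ2) + ∫ p, W p ^ 2 ∂μ2) := by
    rw [hMα]
    calc ∫ p, (f1 p.1 p.2 - ft p.1 p.2) ^ 2 ∂μ2
        = ∫ p, (U p ^ 2 + (2 * (U p * W p) + W p ^ 2)) ∂μ2 :=
          integral_congr_ae (Filter.Eventually.of_forall hsplit)
      _ = (∫ p, U p ^ 2 ∂μ2) + ∫ p, (2 * (U p * W p) + W p ^ 2) ∂μ2 :=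
          integral_add intU2 ((intUW.const_mul 2).add intW2)
      _ = (∫ p, U p ^ 2 ∂μ2) + (2 * (∫ p, U p * W p ∂μ2) + ∫ p, W p ^ 2 ∂μ2) := by
          rw [integral_add (intUW.const_mul 2) intW2, integral_const_mul]
  -- the cross term vanishes
  have hzero : ∀ x : ℝ, ∫ ω, U (ω, x) * W (ω, x) ∂P = 0 := by
    intro x
    have hpm : Measurable (fun ω => fun j : {j : ℤ // j < 1} => T j.1 ω) :=
      measurable_pi_lambda _ (fun j => hTmeas j.1)
    have hInd : Indep (MeasurableSpace.comap (fun ω => fun j : {j : ℤ // j < 1} => T j.1 ω)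
        MeasurableSpace.pi) (MeasurableSpace.comap (Tε 1) MeasurableSpace.pi) P :=
      (IndepFun_iff_Indep _ _ _).1 (hindep_past 1)
    have hpmG : Measurable[MeasurableSpace.comap (fun ω => fun j : {j : ℤ // j < 1} => T j.1 ω)
        MeasurableSpace.pi] (fun ω => fun j : {j : ℤ // j < 1} => T j.1 ω) :=
      Measurable.of_comap_le le_rfl
    have hT0G : ∀ y ∈ Set.Icc (0:ℝ) 1,
        Measurable[MeasurableSpace.comap (fun ω => fun j : {j : ℤ // j < 1} => T j.1 ω)
          MeasurableSpace.pi] fun ω => T 0 ω y := by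
      intro y _
      have h1 : Measurable (fun g : {j : ℤ // j < 1} → (ℝ → ℝ) =>
          g ⟨(0:ℤ), by norm_num⟩ y) :=
        (measurable_pi_apply y).comp (measurable_pi_apply _)
      exact h1.comp hpmG
    have heqq : ∀ ω, U (ω, x) * W (ω, x)
        = U (ω, x) * (f0 ω x - Tε 1 ω (f0 ω x)) := by
      intro ω
      have hfteq : ft ω x = Tε 1 ω (f0 ω x) := by
        simp only [hft, hf0]
        exact hmodel1 ω _ (clamp_mem x)
      simp only [hW]
      rw [hfteq]
    calc ∫ ω, U (ω, x) * W (ω, x) ∂P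
        = ∫ ω, U (ω, x) * (f0 ω x - Tε 1 ω (f0 ω x)) ∂P :=
          integral_congr_ae (Filter.Eventually.of_forall heqq)
      _ = 0 := by
          refine cross_zero P (Tε 1) (hTε 1) (hTεmeas 1) (hmean 1) _ hpm.comap_le hInd
            (fun ω => U (ω, x)) (fun ω => f0 ω x)
            ((hf1m _ hT0G x).sub (hf0m _ hT0G x))
            (fun ω => le_trans (hUb (ω, x)) one_le_two)
            (hf0m _ hT0G x) (fun ω => hf0mem ω x)
  have hUW0 : ∫ p, U p * W p ∂μ2 = 0 := by
    have h1 : ∫ p, U p * W p ∂μ2 = ∫ ω, ∫ x, U (ω, x) * W (ω, x) ∂ν ∂P := by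
      rw [hμ2]
      exact integral_prod _ (by rw [← hμ2]; exact intUW)
    have h2 : (∫ ω, ∫ x, U (ω, x) * W (ω, x) ∂ν ∂P)
        = ∫ x, ∫ ω, U (ω, x) * W (ω, x) ∂P ∂ν := by
      refine integral_integral_swap ?_
      rw [← hμ2] at *
      exact intUW
    rw [h1, h2]
    calc (∫ x, ∫ ω, U (ω, x) * W (ω, x) ∂P ∂ν) = ∫ _, (0:ℝ) ∂ν :=
          integral_congr_ae (Filter.Eventually.of_forall hzero)
      _ = 0 := integral_zero _ _
  have hU2 : 0 ≤ ∫ p, U p ^ 2 ∂μ2 := integral_nonneg fun p => sq_nonneg _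
  rw [hM0, hMα2, hUW0]
  linarith
end
end

section
/- Let T ∈ 𝒯 be L-Lipschitz, let U ∈ 𝒯, and let α₁, α₂ ∈ [0,1]. Then ‖T ∘ [α₁U]⁻¹ − T ∘ [α₂U]⁻¹‖₂ ≤ C·L·|α₁ − α₂|^{1/2} for a universal constant C. -/
open MeasureTheory

noncomputable section

lemma InT.surjOn {G : ℝ → ℝ} (hG : InT G) : Set.SurjOn G (Set.Icc 0 1) (Set.Icc 0 1) := by
  intro y hy
  have h01 : (0:ℝ) ≤ 1 := zero_le_one
  have := intermediate_value_Icc h01 hG.1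
  rw [hG.2.2.2.1, hG.2.2.2.2] at this
  exact this hy

lemma InT.tinv_mem {G : ℝ → ℝ} (hG : InT G) {y : ℝ} (hy : y ∈ Set.Icc (0:ℝ) 1) :
    tinv G y ∈ Set.Icc (0:ℝ) 1 := by
  obtain ⟨x, hx, hxy⟩ := hG.surjOn hy
  exact Function.invFunOn_mem ⟨x, hx, hxy⟩

lemma InT.tinv_eq {G : ℝ → ℝ} (hG : InT G) {y : ℝ} (hy : y ∈ Set.Icc (0:ℝ) 1) :
    G (tinv G y) = y := by
  obtain ⟨x, hx, hxy⟩ := hG.surjOn hy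
  exact Function.invFunOn_eq ⟨x, hx, hxy⟩

lemma InT.tinv_le {G : ℝ → ℝ} (hG : InT G) {y x : ℝ} (hy : y ∈ Set.Icc (0:ℝ) 1)
    (hx : x ∈ Set.Icc (0:ℝ) 1) (h : y ≤ G x) : tinv G y ≤ x := by
  have h1 := hG.tinv_eq hy
  have := (hG.2.1.le_iff_le (hG.tinv_mem hy) hx).mp (by rw [h1]; exact h)
  exact this

lemma InT.le_tinv {G : ℝ → ℝ} (hG : InT G) {y x : ℝ} (hy : y ∈ Set.Icc (0:ℝ) 1)
    (hx : x ∈ Set.Icc (0:ℝ) 1) (h : G x ≤ y) : x ≤ tinv G y := by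
  have h1 := hG.tinv_eq hy
  exact (hG.2.1.le_iff_le hx (hG.tinv_mem hy)).mp (by rw [h1]; exact h)

lemma InT.tinv_mono {G : ℝ → ℝ} (hG : InT G) {y z : ℝ} (hy : y ∈ Set.Icc (0:ℝ) 1)
    (hz : z ∈ Set.Icc (0:ℝ) 1) (h : y ≤ z) : tinv G y ≤ tinv G z := by
  apply hG.tinv_le hy (hG.tinv_mem hz)
  rw [hG.tinv_eq hz]; exact h

lemma InT.tinv_one {G : ℝ → ℝ} (hG : InT G) : tinv G 1 = 1 := by
  have h1 : (1:ℝ) ∈ Set.Icc (0:ℝ) 1 := ⟨zero_le_one, le_refl 1⟩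
  apply hG.2.1.injOn (hG.tinv_mem h1) h1
  rw [hG.tinv_eq h1, hG.2.2.2.2]

lemma InT.tinv_zero {G : ℝ → ℝ} (hG : InT G) : tinv G 0 = 0 := by
  have h0 : (0:ℝ) ∈ Set.Icc (0:ℝ) 1 := ⟨le_refl 0, zero_le_one⟩
  apply hG.2.1.injOn (hG.tinv_mem h0) h0
  rw [hG.tinv_eq h0, hG.2.2.2.1]

lemma contr_of_nonneg {α : ℝ} (hα : 0 ≤ α) (U : ℝ → ℝ) (x : ℝ) :
    contr α U x = x + α * (U x - x) := if_pos hα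

lemma InT.contr_mem {U : ℝ → ℝ} (hU : InT U) {α : ℝ} (hα : α ∈ Set.Icc (0:ℝ) 1) :
    InT (contr α U) := by
  obtain ⟨hα0, hα1⟩ := hα
  have heq : ∀ x, contr α U x = x + α * (U x - x) := fun x => if_pos hα0
  refine ⟨?_, ?_, ?_, ?_, ?_⟩
  · have : ContinuousOn (fun x => x + α * (U x - x)) (Set.Icc 0 1) :=
      continuousOn_id.add (continuousOn_const.mul (hU.1.sub continuousOn_id))
    exact this.congr (fun x _ => heq x)
  · intro x hx y hy hxy
    have hUxy : U x < U y := hU.2.1 hx hy hxy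
    rw [heq x, heq y]
    rcases lt_or_eq_of_le hα1 with h | h
    · nlinarith
    · subst h; nlinarith
  · intro x hx
    obtain ⟨hx0, hx1⟩ := hx
    obtain ⟨hU0, hU1⟩ := hU.2.2.1 ⟨hx0, hx1⟩
    rw [heq x]
    constructor <;> nlinarith
  · rw [heq 0, hU.2.2.2.1]; ring
  · rw [heq 1, hU.2.2.2.2]; ring

lemma contr_close {U : ℝ → ℝ} (hU : InT U) {α₁ α₂ : ℝ} (hα₁ : α₁ ∈ Set.Icc (0:ℝ) 1)
    (hα₂ : α₂ ∈ Set.Icc (0:ℝ) 1) {x : ℝ} (hx : x ∈ Set.Icc (0:ℝ) 1) :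
    |contr α₁ U x - contr α₂ U x| ≤ |α₁ - α₂| := by
  rw [contr_of_nonneg hα₁.1, contr_of_nonneg hα₂.1]
  have h : x + α₁ * (U x - x) - (x + α₂ * (U x - x)) = (α₁ - α₂) * (U x - x) := by ring
  rw [h, abs_mul]
  have hUx := hU.2.2.1 hx
  have : |U x - x| ≤ 1 := by
    rw [abs_le]; constructor <;> [nlinarith [hUx.1, hx.2]; nlinarith [hUx.2, hx.1]]
  nlinarith [abs_nonneg (α₁ - α₂)]

lemma tinv_close {G₁ G₂ : ℝ → ℝ} {ε : ℝ} (hG₁ : InT G₁) (hG₂ : InT G₂) (hε : 0 ≤ ε)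
    (hclose : ∀ x ∈ Set.Icc (0:ℝ) 1, |G₁ x - G₂ x| ≤ ε) {y : ℝ} (hy : y ∈ Set.Icc (0:ℝ) 1) :
    tinv G₁ y ≤ tinv G₂ (min (y + ε) 1) ∧ tinv G₂ (max (y - ε) 0) ≤ tinv G₁ y := by
  obtain ⟨hy0, hy1⟩ := hy
  constructor
  · have hz : min (y + ε) 1 ∈ Set.Icc (0:ℝ) 1 :=
      ⟨le_min (by linarith) zero_le_one, min_le_right _ _⟩
    set x := tinv G₂ (min (y + ε) 1) with hxdef
    have hxm : x ∈ Set.Icc (0:ℝ) 1 := hG₂.tinv_mem hz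
    apply hG₁.tinv_le ⟨hy0, hy1⟩ hxm
    rcases le_or_gt (y + ε) 1 with h | h
    · have h2 : G₂ x = y + ε := by rw [hxdef, hG₂.tinv_eq hz, min_eq_left h]
      have := (abs_le.mp (hclose x hxm)).1
      linarith
    · have hmin : min (y + ε) 1 = 1 := min_eq_right h.le
      have hx1 : x = 1 := by rw [hxdef, hmin, hG₂.tinv_one]
      rw [hx1, hG₁.2.2.2.2]; exact hy1
  · have hz : max (y - ε) 0 ∈ Set.Icc (0:ℝ) 1 :=
      ⟨le_max_right _ _, max_le (by linarith) zero_le_one⟩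
    set x := tinv G₂ (max (y - ε) 0) with hxdef
    have hxm : x ∈ Set.Icc (0:ℝ) 1 := hG₂.tinv_mem hz
    apply hG₁.le_tinv ⟨hy0, hy1⟩ hxm
    rcases le_or_gt 0 (y - ε) with h | h
    · have h2 : G₂ x = y - ε := by rw [hxdef, hG₂.tinv_eq hz, max_eq_left h]
      have := (abs_le.mp (hclose x hxm)).2
      linarith
    · have hmax : max (y - ε) 0 = 0 := max_eq_right h.le
      have hx0 : x = 0 := by rw [hxdef, hmax, hG₂.tinv_zero]
      rw [hx0, hG₁.2.2.2.1]; exact hy0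

lemma shift_integral_le {H : ℝ → ℝ} (hmono : Monotone H) (h0 : ∀ t, 0 ≤ H t)
    (h1 : ∀ t, H t ≤ 1) {ε : ℝ} (hε0 : 0 ≤ ε) (hε2 : ε ≤ 1/2) :
    (∫ y in (0:ℝ)..1, H (y + ε)) - (∫ y in (0:ℝ)..1, H (y - ε)) ≤ 2 * ε := by
  have hint : ∀ a b : ℝ, IntervalIntegrable H volume a b := fun a b => hmono.intervalIntegrable
  have e1 : (∫ y in (0:ℝ)..1, H (y + ε)) = ∫ y in ε..(1 + ε), H y := by
    rw [intervalIntegral.integral_comp_add_right H ε]; norm_num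
  have e2 : (∫ y in (0:ℝ)..1, H (y - ε)) = ∫ y in (-ε)..(1 - ε), H y := by
    rw [intervalIntegral.integral_comp_sub_right H ε]; norm_num
  rw [e1, e2]
  have s1 : (∫ y in ε..(1 - ε), H y) + (∫ y in (1 - ε)..(1 + ε), H y) = ∫ y in ε..(1 + ε), H y :=
    intervalIntegral.integral_add_adjacent_intervals (hint _ _) (hint _ _)
  have s2 : (∫ y in (-ε)..ε, H y) + (∫ y in ε..(1 - ε), H y) = ∫ y in (-ε)..(1 - ε), H y :=
    intervalIntegral.integral_add_adjacent_intervals (hint _ _) (hint _ _)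
  have b1 : (∫ y in (1 - ε)..(1 + ε), H y) ≤ ∫ _y in (1 - ε)..(1 + ε), (1:ℝ) :=
    intervalIntegral.integral_mono_on (by linarith) (hint _ _) intervalIntegrable_const
      (fun x _ => h1 x)
  have b1' : (∫ _y in (1 - ε)..(1 + ε), (1:ℝ)) = 2 * ε := by
    rw [intervalIntegral.integral_const]; simp; ring
  have b2 : 0 ≤ ∫ y in (-ε)..ε, H y :=
    intervalIntegral.integral_nonneg (by linarith) (fun x _ => h0 x)
  linarith


/-- there is a universal constant `C` such that for `T ∈ 𝒯` `L`-Lipschitz,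
`U ∈ 𝒯`, and `α₁, α₂ ∈ [0,1]`: `‖T∘[α₁U]⁻¹ − T∘[α₂U]⁻¹‖₂ ≤ C L |α₁ − α₂|^{1/2}`. -/
theorem composition_inverse_holder : ∃ C : ℝ, 0 < C ∧
    ∀ (L : ℝ) (T U : ℝ → ℝ) (α₁ α₂ : ℝ), InT T → InT U →
      (∀ x ∈ Set.Icc (0:ℝ) 1, ∀ y ∈ Set.Icc (0:ℝ) 1, |T x - T y| ≤ L * |x - y|) →
      α₁ ∈ Set.Icc (0:ℝ) 1 → α₂ ∈ Set.Icc (0:ℝ) 1 →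
      l2dist (fun x => T (tinv (contr α₁ U) x)) (fun x => T (tinv (contr α₂ U) x))
        ≤ C * L * Real.sqrt |α₁ - α₂| := by
  refine ⟨2, two_pos, ?_⟩
  intro L T U α₁ α₂ hT hU hLip hα₁ hα₂
  have h0m : (0:ℝ) ∈ Set.Icc (0:ℝ) 1 := ⟨le_refl 0, zero_le_one⟩
  have h1m : (1:ℝ) ∈ Set.Icc (0:ℝ) 1 := ⟨zero_le_one, le_refl 1⟩
  have hL : 1 ≤ L := by
    have := hLip 1 h1m 0 h0m
    rw [hT.2.2.2.1, hT.2.2.2.2] at this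
    simpa using this
  have hL0 : (0:ℝ) ≤ L := by linarith
  set ε := |α₁ - α₂| with hεdef
  have hε0 : (0:ℝ) ≤ ε := abs_nonneg _
  have hε1 : ε ≤ 1 := by
    rw [hεdef, abs_le]
    constructor <;> [linarith [hα₁.1, hα₂.2]; linarith [hα₁.2, hα₂.1]]
  set G₁ := contr α₁ U with hG₁def
  set G₂ := contr α₂ U with hG₂def
  have hG₁ : InT G₁ := hU.contr_mem hα₁
  have hG₂ : InT G₂ := hU.contr_mem hα₂
  have hclose : ∀ x ∈ Set.Icc (0:ℝ) 1, |G₁ x - G₂ x| ≤ ε := fun x hx =>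
    contr_close hU hα₁ hα₂ hx
  -- clamp
  set c : ℝ → ℝ := fun t => max 0 (min t 1) with hcdef
  have hc_mem : ∀ t, c t ∈ Set.Icc (0:ℝ) 1 :=
    fun t => ⟨le_max_left _ _, max_le zero_le_one (min_le_right _ _)⟩
  have hc_mono : Monotone c := fun s t h => max_le_max le_rfl (min_le_min h le_rfl)
  have hc_id : ∀ x ∈ Set.Icc (0:ℝ) 1, c x = x := by
    intro x hx
    rw [hcdef]
    simp only [min_eq_left hx.2, max_eq_right hx.1]
  set H : ℝ → ℝ := fun t => tinv G₂ (c t) with hHdef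
  have hH_mono : Monotone H := fun s t h =>
    hG₂.tinv_mono (hc_mem s) (hc_mem t) (hc_mono h)
  have hH0 : ∀ t, 0 ≤ H t := fun t => (hG₂.tinv_mem (hc_mem t)).1
  have hH1 : ∀ t, H t ≤ 1 := fun t => (hG₂.tinv_mem (hc_mem t)).2
  set ψ₁ : ℝ → ℝ := fun t => T (tinv G₁ (c t)) with hψ₁def
  set ψ₂ : ℝ → ℝ := fun t => T (tinv G₂ (c t)) with hψ₂def
  have hψ₁mono : Monotone ψ₁ := fun s t h =>
    hT.2.1.monotoneOn (hG₁.tinv_mem (hc_mem s)) (hG₁.tinv_mem (hc_mem t))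
      (hG₁.tinv_mono (hc_mem s) (hc_mem t) (hc_mono h))
  have hψ₂mono : Monotone ψ₂ := fun s t h =>
    hT.2.1.monotoneOn (hG₂.tinv_mem (hc_mem s)) (hG₂.tinv_mem (hc_mem t))
      (hG₂.tinv_mono (hc_mem s) (hc_mem t) (hc_mono h))
  have hψ₁mem : ∀ t, ψ₁ t ∈ Set.Icc (0:ℝ) 1 := fun t => hT.2.2.1 (hG₁.tinv_mem (hc_mem t))
  have hψ₂mem : ∀ t, ψ₂ t ∈ Set.Icc (0:ℝ) 1 := fun t => hT.2.2.1 (hG₂.tinv_mem (hc_mem t))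
  -- integrability of the square
  have hψint : IntervalIntegrable (fun x => (ψ₁ x - ψ₂ x)^2) volume 0 1 := by
    rw [intervalIntegrable_iff]
    apply Measure.integrableOn_of_bounded (M := 1)
    · rw [Set.uIoc_of_le (zero_le_one : (0:ℝ) ≤ 1)]
      exact (measure_Ioc_lt_top).ne
    · exact ((hψ₁mono.measurable.sub hψ₂mono.measurable).pow_const 2).aestronglyMeasurable
    · filter_upwards with x
      have h1 := hψ₁mem x; have h2 := hψ₂mem x
      rw [Real.norm_eq_abs, abs_le]
      constructor <;> nlinarith [h1.1, h1.2, h2.1, h2.2]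
  have hfeq : ∀ x ∈ Set.Icc (0:ℝ) 1,
      (T (tinv G₁ x) - T (tinv G₂ x))^2 = (ψ₁ x - ψ₂ x)^2 := by
    intro x hx
    rw [hψ₁def, hψ₂def]
    simp only [hc_id x hx]
  have hfint : IntervalIntegrable (fun x => (T (tinv G₁ x) - T (tinv G₂ x))^2) volume 0 1 := by
    rw [intervalIntegrable_iff] at hψint ⊢
    refine hψint.congr_fun ?_ measurableSet_uIoc
    intro x hx
    rw [Set.uIoc_of_le (zero_le_one : (0:ℝ) ≤ 1)] at hx
    exact (hfeq x ⟨hx.1.le, hx.2⟩).symm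
  -- the main integral bound
  have hkey : (∫ x in (0:ℝ)..1, (T (tinv G₁ x) - T (tinv G₂ x))^2) ≤ 4 * L^2 * ε := by
    rcases le_or_gt ε (1/2) with hhalf | hhalf
    · -- pointwise bound by L² (H(x+ε) - H(x-ε))
      have hDint₁ : IntervalIntegrable (fun y => H (y + ε)) volume 0 1 :=
        (hH_mono.comp (fun s t h => by dsimp; linarith : Monotone fun y : ℝ => y + ε)).intervalIntegrable
      have hDint₂ : IntervalIntegrable (fun y => H (y - ε)) volume 0 1 :=
        (hH_mono.comp (fun s t h => by dsimp; linarith : Monotone fun y : ℝ => y - ε)).intervalIntegrable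
      have hDint : IntervalIntegrable (fun y => L^2 * (H (y + ε) - H (y - ε))) volume 0 1 :=
        (hDint₁.sub hDint₂).const_mul _
      have hpt : ∀ x ∈ Set.Icc (0:ℝ) 1,
          (T (tinv G₁ x) - T (tinv G₂ x))^2 ≤ L^2 * (H (x + ε) - H (x - ε)) := by
        intro x hx
        have hub := (tinv_close hG₁ hG₂ hε0 hclose hx).1
        have hlb := (tinv_close hG₁ hG₂ hε0 hclose hx).2
        have hzp : min (x + ε) 1 ∈ Set.Icc (0:ℝ) 1 :=
          ⟨le_min (by linarith [hx.1]) zero_le_one, min_le_right _ _⟩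
        have hzm : max (x - ε) 0 ∈ Set.Icc (0:ℝ) 1 :=
          ⟨le_max_right _ _, max_le (by linarith [hx.2]) zero_le_one⟩
        have hcp : c (x + ε) = min (x + ε) 1 := by
          rw [hcdef]; exact max_eq_right hzp.1
        have hcm : c (x - ε) = max (x - ε) 0 := by
          rw [hcdef]
          simp only [min_eq_left (by linarith [hx.2] : x - ε ≤ 1)]
          exact max_comm _ _
        set A := tinv G₂ (max (x - ε) 0) with hA
        set B := tinv G₂ (min (x + ε) 1) with hB
        have hHp : H (x + ε) = B := by rw [hHdef]; simp only [hcp]; rfl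
        have hHm : H (x - ε) = A := by rw [hHdef]; simp only [hcm]; rfl
        have hA0 : 0 ≤ A := (hG₂.tinv_mem hzm).1
        have hB1 : B ≤ 1 := (hG₂.tinv_mem hzp).2
        have h2lb : A ≤ tinv G₂ x := hG₂.tinv_mono hzm hx (max_le (by linarith) hx.1)
        have h2ub : tinv G₂ x ≤ B := hG₂.tinv_mono hx hzp (le_min (by linarith) hx.2)
        have hAB : A ≤ B := le_trans h2lb h2ub
        have habs : |tinv G₁ x - tinv G₂ x| ≤ B - A := by
          rw [abs_le]; constructor <;> linarith
        have hlip := hLip (tinv G₁ x) (hG₁.tinv_mem hx) (tinv G₂ x) (hG₂.tinv_mem hx)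
        have h3 : |T (tinv G₁ x) - T (tinv G₂ x)| ≤ L * (B - A) := by
          refine le_trans hlip ?_
          exact mul_le_mul_of_nonneg_left habs hL0
        have h4 : |T (tinv G₁ x) - T (tinv G₂ x)|^2 ≤ (L * (B - A))^2 :=
          pow_le_pow_left₀ (abs_nonneg _) h3 2
        rw [sq_abs] at h4
        rw [hHp, hHm]
        have h5 : (B - A)^2 ≤ B - A := by nlinarith
        have h6 : L^2 * (B - A)^2 ≤ L^2 * (B - A) := mul_le_mul_of_nonneg_left h5 (sq_nonneg L)
        have h7 : (L * (B - A))^2 = L^2 * (B - A)^2 := by ring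
        linarith
      have hmono_int := intervalIntegral.integral_mono_on zero_le_one hfint hDint hpt
      have hDval : (∫ x in (0:ℝ)..1, L^2 * (H (x + ε) - H (x - ε)))
          = L^2 * ((∫ y in (0:ℝ)..1, H (y + ε)) - ∫ y in (0:ℝ)..1, H (y - ε)) := by
        rw [intervalIntegral.integral_const_mul, intervalIntegral.integral_sub hDint₁ hDint₂]
      have hshift := shift_integral_le hH_mono hH0 hH1 hε0 hhalf
      have hL2 : (0:ℝ) ≤ L^2 := sq_nonneg L
      calc (∫ x in (0:ℝ)..1, (T (tinv G₁ x) - T (tinv G₂ x))^2)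
          ≤ L^2 * ((∫ y in (0:ℝ)..1, H (y + ε)) - ∫ y in (0:ℝ)..1, H (y - ε)) := by
            rw [← hDval]; exact hmono_int
        _ ≤ L^2 * (2 * ε) := mul_le_mul_of_nonneg_left hshift hL2
        _ ≤ 4 * L^2 * ε := by nlinarith
    · -- trivial bound
      have hpt : ∀ x ∈ Set.Icc (0:ℝ) 1,
          (T (tinv G₁ x) - T (tinv G₂ x))^2 ≤ (1:ℝ) := by
        intro x hx
        have h1 := hT.2.2.1 (hG₁.tinv_mem hx)
        have h2 := hT.2.2.1 (hG₂.tinv_mem hx)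
        nlinarith [h1.1, h1.2, h2.1, h2.2]
      have := intervalIntegral.integral_mono_on zero_le_one hfint intervalIntegrable_const hpt
      have hone : (∫ _x in (0:ℝ)..1, (1:ℝ)) = 1 := by simp
      rw [hone] at this
      nlinarith [sq_nonneg L]
  -- conclude
  simp only [l2dist]
  have hs := Real.sqrt_le_sqrt hkey
  have heq : Real.sqrt (4 * L^2 * ε) = 2 * L * Real.sqrt ε := by
    rw [show 4 * L^2 * ε = (2 * L)^2 * ε by ring, Real.sqrt_mul (sq_nonneg _),
      Real.sqrt_sq (by linarith : (0:ℝ) ≤ 2 * L)]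
  rw [heq] at hs
  exact hs
end
end

section
/- Let S ∈ 𝒯 be L_S-Lipschitz, let α ∈ [0,1], and let (T_{ε_i})_{i∈ℤ} be i.i.d. random elements of 𝒯 satisfying E|T_{ε_i}(x) − T_{ε_i}(y)|² ≤ L_ε²·|x−y|² for all x,y ∈ [0,1]. Define Φ_i(T) = T_{ε_i} ∘ S ∘ [αT] and the m-fold composition Φ̃_{i,m}(T) = Φ_i ∘ Φ_{i−1} ∘ ⋯ ∘ Φ_{i−m+1}(T). If α·L_S·L_ε < 1, then for all i ∈ ℤ, m ∈ ℕ, and all T, Q ∈ 𝒯: E‖Φ̃_{i,m}(Q) − Φ̃_{i,m}(T)‖₂² ≤ (α·L_S·L_ε)^{2m}·‖Q − T‖₂²; in particular the geometric moment contracting condition holds with exponent η = 2. -/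
open MeasureTheory ProbabilityTheory Filter Set

noncomputable section

/-- The α-contraction `[αT]` for `α ∈ [0,1]`. -/
def contrNN (α : ℝ) (T : ℝ → ℝ) (x : ℝ) : ℝ := x + α * (T x - x)

/-- The iterated random maps: `iter Tε S α m i T ω = Φ̃_{i,m}(T)(ω)`, where
`Φ_i(T) = T_{ε_i} ∘ S ∘ [αT]` and `Φ̃_{i,m} = Φ_i ∘ Φ_{i−1} ∘ ⋯ ∘ Φ_{i−m+1}`. -/
def iter {Ω : Type*} (Tε : ℤ → Ω → ℝ → ℝ) (S : ℝ → ℝ) (α : ℝ) :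
    ℕ → ℤ → (ℝ → ℝ) → Ω → ℝ → ℝ
  | 0, _, T, _, x => T x
  | m + 1, i, T, ω, x => Tε i ω (S (contrNN α (fun y => iter Tε S α m (i - 1) T ω y) x))


def clampI (x : ℝ) : ℝ := max 0 (min 1 x)

lemma clampI_mem (x : ℝ) : clampI x ∈ Icc (0:ℝ) 1 := by
  constructor
  · exact le_max_left _ _
  · simp [clampI]

lemma clampI_eq {x : ℝ} (hx : x ∈ Icc (0:ℝ) 1) : clampI x = x := by
  simp [clampI, hx.1, hx.2, max_eq_right, min_eq_right]

lemma measurable_clampI : Measurable clampI := by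
  unfold clampI; fun_prop

def projI (n : ℕ) (x : ℝ) : ℝ := clampI (⌈x * (n + 1)⌉ / (n + 1))

lemma measurable_projI (n : ℕ) : Measurable (projI n) := by
  apply measurable_clampI.comp
  have h1 : Measurable fun x : ℝ => (⌈x * (n + 1)⌉ : ℝ) :=
    (measurable_from_top (f := fun k : ℤ => (k:ℝ))).comp (Measurable.ceil (by fun_prop))
  exact h1.div_const _

lemma countable_range_projI (n : ℕ) : (Set.range (projI n)).Countable := by
  have : Set.range (projI n) ⊆ Set.range (fun k : ℤ => clampI (k / (n+1))) := by
    rintro y ⟨x, rfl⟩; exact ⟨⌈x * (n+1)⌉, rfl⟩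
  exact Set.Countable.mono this (Set.countable_range _)

lemma projI_mem (n : ℕ) (x : ℝ) : projI n x ∈ Icc (0:ℝ) 1 := clampI_mem _

lemma projI_tendsto {x : ℝ} (hx : x ∈ Icc (0:ℝ) 1) :
    Tendsto (fun n => projI n x) atTop (nhds x) := by
  have key : ∀ n : ℕ, x ≤ projI n x ∧ projI n x ≤ x + 1 / (n + 1) := by
    intro n
    have hn : (0:ℝ) < n + 1 := by positivity
    have h1 : x * (n+1) ≤ ⌈x * (n+1)⌉ := Int.le_ceil _
    have h2 : (⌈x * (n+1)⌉ : ℝ) < x * (n+1) + 1 := Int.ceil_lt_add_one _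
    have hge : x ≤ (⌈x * (n+1)⌉:ℝ) / (n+1) := by
      rw [le_div_iff₀ hn]; exact h1
    have hle : (⌈x * (n+1)⌉:ℝ) / (n+1) ≤ x + 1/(n+1) := by
      rw [div_le_iff₀ hn]
      have hc : (1/((n:ℝ)+1)) * ((n:ℝ)+1) = 1 := by field_simp
      nlinarith
    have h0 : (0:ℝ) ≤ (⌈x * (n+1)⌉:ℝ) / (n+1) := le_trans hx.1 hge
    constructor
    · rcases le_or_gt ((⌈x * (n+1)⌉:ℝ) / (n+1)) 1 with h | h
      · rw [projI, clampI, min_eq_right h, max_eq_right h0]; exact hge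
      · rw [projI, clampI, min_eq_left h.le]; simpa using hx.2
    · rcases le_or_gt ((⌈x * (n+1)⌉:ℝ) / (n+1)) 1 with h | h
      · rw [projI, clampI, min_eq_right h, max_eq_right h0]; exact hle
      · rw [projI, clampI, min_eq_left h.le]
        have : (1:ℝ) ≤ x + 1/(n+1) := le_trans h.le hle
        simpa using this
  have h1 : Tendsto (fun n : ℕ => x + 1 / ((n:ℝ) + 1)) atTop (nhds x) := by
    have := tendsto_one_div_add_atTop_nhds_zero_nat (𝕜 := ℝ)
    have := (tendsto_const_nhds (x := x) (f := atTop (α := ℕ))).add this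
    simpa using this
  exact tendsto_of_tendsto_of_tendsto_of_le_of_le tendsto_const_nhds h1
    (fun n => (key n).1) (fun n => (key n).2)

/-- A measurable "evaluation": `ev t x = t x` whenever `t` is continuous on `[0,1]`
and `x ∈ [0,1]`. -/
def ev (t : ℝ → ℝ) (x : ℝ) : ℝ := limsup (fun n => t (projI n x)) atTop

lemma measurable_eval_countable {γ : Type*} [MeasurableSpace γ] {f : γ → ℝ → ℝ}
    (hf : Measurable f) {g : γ → ℝ} (hg : Measurable g)
    (hc : (Set.range g).Countable) : Measurable fun c => f c (g c) := by
  intro s hs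
  have : (fun c => f c (g c)) ⁻¹' s =
      ⋃ q ∈ Set.range g, {c | g c = q} ∩ {c | f c q ∈ s} := by
    ext c; simp only [Set.mem_preimage, Set.mem_iUnion, Set.mem_inter_iff, Set.mem_setOf_eq]
    constructor
    · intro h; exact ⟨g c, ⟨c, rfl⟩, rfl, h⟩
    · rintro ⟨q, _, rfl, h⟩; exact h
  rw [this]
  apply MeasurableSet.biUnion hc
  intro q _
  exact (hg (measurableSet_singleton q)).inter ((hf.eval (a := q)) hs)

lemma measurable_ev {γ : Type*} [MeasurableSpace γ] {f : γ → ℝ → ℝ}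
    (hf : Measurable f) {g : γ → ℝ} (hg : Measurable g) :
    Measurable fun c => ev (f c) (g c) := by
  apply Measurable.limsup
  intro n
  exact measurable_eval_countable hf ((measurable_projI n).comp hg)
    (Set.Countable.mono (Set.range_comp_subset_range g (projI n)) (countable_range_projI n))

lemma ev_eq {t : ℝ → ℝ} {x : ℝ} (ht : ContinuousOn t (Icc 0 1)) (hx : x ∈ Icc (0:ℝ) 1) :
    ev t x = t x := by
  have : Tendsto (fun n => t (projI n x)) atTop (nhds (t x)) := by
    have := (ht x hx).tendsto
    exact this.comp (tendsto_nhdsWithin_of_tendsto_nhds_of_eventually_within _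
      (projI_tendsto hx) (Eventually.of_forall fun n => projI_mem n x))
  exact this.limsup_eq

lemma contrNN_mem {α x : ℝ} {T : ℝ → ℝ} (hα : α ∈ Icc (0:ℝ) 1) (hx : x ∈ Icc (0:ℝ) 1)
    (hTx : T x ∈ Icc (0:ℝ) 1) : contrNN α T x ∈ Icc (0:ℝ) 1 := by
  unfold contrNN
  obtain ⟨h1, h2⟩ := hα; obtain ⟨h3, h4⟩ := hx; obtain ⟨h5, h6⟩ := hTx
  constructor <;> nlinarith

lemma iter_mem {Ω : Type*} {Tε : ℤ → Ω → ℝ → ℝ} {S : ℝ → ℝ} {α : ℝ} {T : ℝ → ℝ}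
    (hS : InT S) (hT : InT T) (hTε : ∀ i ω, InT (Tε i ω)) (hα : α ∈ Icc (0:ℝ) 1) :
    ∀ (m : ℕ) (i : ℤ) (ω : Ω) (x : ℝ), x ∈ Icc (0:ℝ) 1 →
      iter Tε S α m i T ω x ∈ Icc (0:ℝ) 1 := by
  intro m
  induction m with
  | zero => intro i ω x hx; exact hT.2.2.1 hx
  | succ m ih =>
    intro i ω x hx
    have h1 : contrNN α (fun y => iter Tε S α m (i-1) T ω y) x ∈ Icc (0:ℝ) 1 :=
      contrNN_mem hα hx (ih (i-1) ω x hx)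
    exact (hTε i ω).2.2.1 (hS.2.2.1 h1)

/-- Deterministic mirror of `iter` built from the measurable evaluation `ev`. -/
def eiter (S : ℝ → ℝ) (α : ℝ) : ℕ → ℤ → (ℝ → ℝ) → (ℤ → ℝ → ℝ) → ℝ → ℝ
  | 0, _, T, _, x => ev T x
  | m + 1, i, T, f, x =>
      ev (f i) (ev S (contrNN α (fun y => eiter S α m (i - 1) T f y) x))

lemma measurable_eiter (S : ℝ → ℝ) (α : ℝ) (T : ℝ → ℝ) :
    ∀ (m : ℕ) (i : ℤ),
      Measurable (fun p : (ℤ → ℝ → ℝ) × ℝ => eiter S α m i T p.1 p.2) := by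
  intro m
  induction m with
  | zero =>
    intro i
    exact measurable_ev (f := fun _ => T) measurable_const measurable_snd
  | succ m ih =>
    intro i
    show Measurable fun p : (ℤ → ℝ → ℝ) × ℝ =>
      ev (p.1 i) (ev S (contrNN α (fun y => eiter S α m (i - 1) T p.1 y) p.2))
    have h1 : Measurable fun p : (ℤ → ℝ → ℝ) × ℝ =>
        contrNN α (fun y => eiter S α m (i - 1) T p.1 y) p.2 := by
      unfold contrNN
      exact measurable_snd.add ((( (ih (i-1)).sub measurable_snd)).const_mul α)
    have h2 : Measurable fun p : (ℤ → ℝ → ℝ) × ℝ =>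
        ev S (contrNN α (fun y => eiter S α m (i - 1) T p.1 y) p.2) :=
      measurable_ev (f := fun _ => S) measurable_const h1
    exact measurable_ev ((measurable_pi_apply i).comp measurable_fst) h2

lemma eiter_congr (S : ℝ → ℝ) (α : ℝ) (T : ℝ → ℝ) :
    ∀ (m : ℕ) (i : ℤ) (f g : ℤ → ℝ → ℝ),
      (∀ j, i - m < j → j ≤ i → f j = g j) →
      ∀ x, eiter S α m i T f x = eiter S α m i T g x := by
  intro m
  induction m with
  | zero => intro i f g _ x; rfl
  | succ m ih =>
    intro i f g h x
    show ev (f i) _ = ev (g i) _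
    have hfg : f i = g i := h i (by omega) le_rfl
    have hrec : ∀ y, eiter S α m (i-1) T f y = eiter S α m (i-1) T g y :=
      ih (i-1) f g (fun j h1 h2 => h j (by omega) (by omega))
    rw [hfg]
    congr 2
    unfold contrNN
    simp only []
    rw [hrec x]

lemma eiter_eq {Ω : Type*} {Tε : ℤ → Ω → ℝ → ℝ} {S : ℝ → ℝ} {α : ℝ} {T : ℝ → ℝ}
    (hS : InT S) (hT : InT T) (hTε : ∀ i ω, InT (Tε i ω)) (hα : α ∈ Icc (0:ℝ) 1) :
    ∀ (m : ℕ) (i : ℤ) (ω : Ω) (x : ℝ), x ∈ Icc (0:ℝ) 1 →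
      eiter S α m i T (fun j => Tε j ω) x = iter Tε S α m i T ω x := by
  intro m
  induction m with
  | zero => intro i ω x hx; exact ev_eq hT.1 hx
  | succ m ih =>
    intro i ω x hx
    show ev (Tε i ω) (ev S (contrNN α (fun y => eiter S α m (i-1) T (fun j => Tε j ω) y) x))
        = Tε i ω (S (contrNN α (fun y => iter Tε S α m (i-1) T ω y) x))
    have hc : contrNN α (fun y => eiter S α m (i-1) T (fun j => Tε j ω) y) x
        = contrNN α (fun y => iter Tε S α m (i-1) T ω y) x := by
      unfold contrNN; simp only []; rw [ih (i-1) ω x hx]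
    rw [hc]
    have hmem : contrNN α (fun y => iter Tε S α m (i-1) T ω y) x ∈ Icc (0:ℝ) 1 :=
      contrNN_mem hα hx (iter_mem hS hT hTε hα m (i-1) ω x hx)
    rw [ev_eq hS.1 hmem, ev_eq (hTε i ω).1 (hS.2.2.1 hmem)]

section Main

variable {Ω : Type*} [MeasurableSpace Ω]

lemma integrable_of_bound (P : Measure Ω) [IsFiniteMeasure P] {f : Ω → ℝ} (C : ℝ)
    (hm : AEStronglyMeasurable f P) (h : ∀ᵐ ω ∂P, |f ω| ≤ C) : Integrable f P :=
  Integrable.mono' (integrable_const C) hm (h.mono fun ω h => by rwa [Real.norm_eq_abs])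

lemma measurable_iter_fixed {Tε : ℤ → Ω → ℝ → ℝ} {S : ℝ → ℝ} {α : ℝ} {T : ℝ → ℝ}
    (hS : InT S) (hT : InT T) (hTε : ∀ i ω, InT (Tε i ω)) (hα : α ∈ Icc (0:ℝ) 1)
    (hTεmeas : ∀ i, Measurable (Tε i)) (m : ℕ) (i : ℤ) {x : ℝ} (hx : x ∈ Icc (0:ℝ) 1) :
    Measurable fun ω => iter Tε S α m i T ω x := by
  have he : (fun ω => iter Tε S α m i T ω x)
      = fun ω => eiter S α m i T (fun j => Tε j ω) x :=
    funext fun ω => (eiter_eq hS hT hTε hα m i ω x hx).symm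
  rw [he]
  exact (measurable_eiter S α T m i).comp
    ((measurable_pi_lambda _ fun j => hTεmeas j).prodMk measurable_const)

lemma step_bound (P : Measure Ω) [IsProbabilityMeasure P]
    (S : ℝ → ℝ) (hS : InT S) (LS : ℝ) (hLS : 0 ≤ LS)
    (hSlip : ∀ x ∈ Icc (0:ℝ) 1, ∀ y ∈ Icc (0:ℝ) 1, |S x - S y| ≤ LS * |x - y|)
    (α : ℝ) (hα : α ∈ Icc (0:ℝ) 1)
    (Tε : ℤ → Ω → ℝ → ℝ) (hTε : ∀ i ω, InT (Tε i ω)) (hTεmeas : ∀ i, Measurable (Tε i))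
    (hindep : iIndepFun Tε P)
    (Lε : ℝ) (hLε : 0 ≤ Lε)
    (hεlip : ∀ i, ∀ x ∈ Icc (0:ℝ) 1, ∀ y ∈ Icc (0:ℝ) 1,
      ∫ ω, (Tε i ω x - Tε i ω y)^2 ∂P ≤ Lε^2 * (x - y)^2)
    (i : ℤ) (m : ℕ) (T Q : ℝ → ℝ) (hT : InT T) (hQ : InT Q)
    (x : ℝ) (hx : x ∈ Icc (0:ℝ) 1) :
    ∫ ω, (iter Tε S α (m+1) i Q ω x - iter Tε S α (m+1) i T ω x)^2 ∂P
      ≤ (α*LS*Lε)^2 *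
        ∫ ω, (iter Tε S α m (i-1) Q ω x - iter Tε S α m (i-1) T ω x)^2 ∂P := by
  classical
  set A : Ω → ℝ := fun ω => S (contrNN α (fun y => iter Tε S α m (i-1) Q ω y) x) with hA
  set B : Ω → ℝ := fun ω => S (contrNN α (fun y => iter Tε S α m (i-1) T ω y) x) with hB
  have hQmem : ∀ ω, iter Tε S α m (i-1) Q ω x ∈ Icc (0:ℝ) 1 :=
    fun ω => iter_mem hS hQ hTε hα m (i-1) ω x hx
  have hTmem : ∀ ω, iter Tε S α m (i-1) T ω x ∈ Icc (0:ℝ) 1 :=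
    fun ω => iter_mem hS hT hTε hα m (i-1) ω x hx
  have hcQmem : ∀ ω, contrNN α (fun y => iter Tε S α m (i-1) Q ω y) x ∈ Icc (0:ℝ) 1 :=
    fun ω => contrNN_mem hα hx (hQmem ω)
  have hcTmem : ∀ ω, contrNN α (fun y => iter Tε S α m (i-1) T ω y) x ∈ Icc (0:ℝ) 1 :=
    fun ω => contrNN_mem hα hx (hTmem ω)
  have hAmem : ∀ ω, A ω ∈ Icc (0:ℝ) 1 := fun ω => hS.2.2.1 (hcQmem ω)
  have hBmem : ∀ ω, B ω ∈ Icc (0:ℝ) 1 := fun ω => hS.2.2.1 (hcTmem ω)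
  -- pointwise Lipschitz bound for A - B
  have hABsq : ∀ ω, (A ω - B ω)^2
      ≤ (LS*α)^2 * (iter Tε S α m (i-1) Q ω x - iter Tε S α m (i-1) T ω x)^2 := by
    intro ω
    have h1 : |A ω - B ω| ≤ LS * |contrNN α (fun y => iter Tε S α m (i-1) Q ω y) x
        - contrNN α (fun y => iter Tε S α m (i-1) T ω y) x| :=
      hSlip _ (hcQmem ω) _ (hcTmem ω)
    have h2 : contrNN α (fun y => iter Tε S α m (i-1) Q ω y) x
        - contrNN α (fun y => iter Tε S α m (i-1) T ω y) x
        = α * (iter Tε S α m (i-1) Q ω x - iter Tε S α m (i-1) T ω x) := by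
      unfold contrNN; ring
    rw [h2, abs_mul, abs_of_nonneg hα.1, ← mul_assoc] at h1
    nlinarith [sq_abs (A ω - B ω), sq_abs (iter Tε S α m (i-1) Q ω x
      - iter Tε S α m (i-1) T ω x), abs_nonneg (iter Tε S α m (i-1) Q ω x
      - iter Tε S α m (i-1) T ω x), abs_nonneg (A ω - B ω),
      mul_nonneg (mul_nonneg hLS hα.1) (abs_nonneg (iter Tε S α m (i-1) Q ω x
      - iter Tε S α m (i-1) T ω x))]
  -- deterministic versions of A and B
  set 𝒜 : (ℤ → ℝ → ℝ) → ℝ :=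
    fun f => ev S (contrNN α (fun y => eiter S α m (i-1) Q f y) x) with h𝒜
  set ℬ : (ℤ → ℝ → ℝ) → ℝ :=
    fun f => ev S (contrNN α (fun y => eiter S α m (i-1) T f y) x) with hℬ
  have h𝒜meas : Measurable 𝒜 := by
    apply measurable_ev (f := fun _ => S) measurable_const
    unfold contrNN
    simp only []
    have : Measurable fun f : ℤ → ℝ → ℝ => eiter S α m (i-1) Q f x :=
      (measurable_eiter S α Q m (i-1)).comp (measurable_id.prodMk measurable_const)
    fun_prop
  have hℬmeas : Measurable ℬ := by
    apply measurable_ev (f := fun _ => S) measurable_const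
    unfold contrNN
    simp only []
    have : Measurable fun f : ℤ → ℝ → ℝ => eiter S α m (i-1) T f x :=
      (measurable_eiter S α T m (i-1)).comp (measurable_id.prodMk measurable_const)
    fun_prop
  have h𝒜A : ∀ ω, 𝒜 (fun j => Tε j ω) = A ω := by
    intro ω
    show ev S (contrNN α (fun y => eiter S α m (i-1) Q (fun j => Tε j ω) y) x) = A ω
    have hc : contrNN α (fun y => eiter S α m (i-1) Q (fun j => Tε j ω) y) x
        = contrNN α (fun y => iter Tε S α m (i-1) Q ω y) x := by
      unfold contrNN; simp only []
      rw [eiter_eq hS hQ hTε hα m (i-1) ω x hx]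
    rw [hc, ev_eq hS.1 (hcQmem ω)]
  have hℬB : ∀ ω, ℬ (fun j => Tε j ω) = B ω := by
    intro ω
    show ev S (contrNN α (fun y => eiter S α m (i-1) T (fun j => Tε j ω) y) x) = B ω
    have hc : contrNN α (fun y => eiter S α m (i-1) T (fun j => Tε j ω) y) x
        = contrNN α (fun y => iter Tε S α m (i-1) T ω y) x := by
      unfold contrNN; simp only []
      rw [eiter_eq hS hT hTε hα m (i-1) ω x hx]
    rw [hc, ev_eq hS.1 (hcTmem ω)]
  -- independence of (A, B) and Tε i
  set Sf : Finset ℤ := Finset.Icc (i-m) (i-1) with hSf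
  set extf : ({j // j ∈ Sf} → (ℝ → ℝ)) → (ℤ → ℝ → ℝ) :=
    fun h j => if hj : j ∈ Sf then h ⟨j, hj⟩ else id with hextf
  have hextmeas : Measurable extf := by
    apply measurable_pi_lambda
    intro j
    by_cases hj : j ∈ Sf
    · simp only [hextf, dif_pos hj]
      exact measurable_pi_apply _
    · simp only [hextf, dif_neg hj]
      exact measurable_const
  have hextagree : ∀ ω j, j ∈ Sf → extf (fun k : {j // j ∈ Sf} => Tε k.1 ω) j = Tε j ω := by
    intro ω j hj
    simp only [hextf, dif_pos hj]
  have hcongr𝒜 : ∀ ω, 𝒜 (extf (fun k : {j // j ∈ Sf} => Tε k.1 ω)) = 𝒜 (fun j => Tε j ω) := by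
    intro ω
    show ev S _ = ev S _
    congr 1
    unfold contrNN
    simp only []
    rw [eiter_congr S α Q m (i-1) _ _ (fun j h1 h2 => hextagree ω j
      (by rw [hSf]; simp only [Finset.mem_Icc]; omega)) x]
  have hcongrℬ : ∀ ω, ℬ (extf (fun k : {j // j ∈ Sf} => Tε k.1 ω)) = ℬ (fun j => Tε j ω) := by
    intro ω
    show ev S _ = ev S _
    congr 1
    unfold contrNN
    simp only []
    rw [eiter_congr S α T m (i-1) _ _ (fun j h1 h2 => hextagree ω j
      (by rw [hSf]; simp only [Finset.mem_Icc]; omega)) x]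
  set Y : Ω → ℝ × ℝ := fun ω => (A ω, B ω) with hY
  have hYmeas : Measurable Y := by
    have hAm : Measurable A := by
      have : A = fun ω => 𝒜 (fun j => Tε j ω) := funext fun ω => (h𝒜A ω).symm
      rw [this]
      exact h𝒜meas.comp (measurable_pi_lambda _ fun j => hTεmeas j)
    have hBm : Measurable B := by
      have : B = fun ω => ℬ (fun j => Tε j ω) := funext fun ω => (hℬB ω).symm
      rw [this]
      exact hℬmeas.comp (measurable_pi_lambda _ fun j => hTεmeas j)
    exact hAm.prodMk hBm
  have hIndep : IndepFun Y (Tε i) P := by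
    have hdisj : Disjoint Sf ({i} : Finset ℤ) := by
      simp only [Finset.disjoint_left, hSf, Finset.mem_Icc, Finset.mem_singleton]
      intro a ha
      omega
    have h0 := hindep.indepFun_finset Sf {i} hdisj hTεmeas
    have h1 := h0.comp (_mγ' := MeasurableSpace.pi) (φ := fun h => (𝒜 (extf h), ℬ (extf h)))
      (ψ := fun h : ({j // j ∈ ({i} : Finset ℤ)} → (ℝ → ℝ)) => h ⟨i, Finset.mem_singleton_self i⟩)
      ((h𝒜meas.comp hextmeas).prodMk (hℬmeas.comp hextmeas)) (by exact measurable_pi_apply _)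
    have e1 : (fun ω => (𝒜 (extf fun k : {j // j ∈ Sf} => Tε k.1 ω),
        ℬ (extf fun k : {j // j ∈ Sf} => Tε k.1 ω))) = Y := by
      funext ω
      rw [hcongr𝒜 ω, hcongrℬ ω, h𝒜A ω, hℬB ω]
    have e2 : (fun ω => (fun k : {j // j ∈ ({i} : Finset ℤ)} => Tε k.1 ω)
        ⟨i, Finset.mem_singleton_self i⟩) = Tε i := rfl
    rw [← e1, ← e2]
    exact h1
  -- the joint law is a product law
  have hXmeas := hTεmeas i
  have hmap : P.map (fun ω => (Y ω, Tε i ω)) = (P.map Y).prod (P.map (Tε i)) :=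
    (indepFun_iff_map_prod_eq_prod_map_map hYmeas.aemeasurable hXmeas.aemeasurable).mp hIndep
  haveI : IsProbabilityMeasure (P.map Y) := Measure.isProbabilityMeasure_map hYmeas.aemeasurable
  haveI : IsProbabilityMeasure (P.map (Tε i)) := Measure.isProbabilityMeasure_map hXmeas.aemeasurable
  have sq_diff_le_one : ∀ {a b : ℝ}, a ∈ Icc (0:ℝ) 1 → b ∈ Icc (0:ℝ) 1 → (a - b)^2 ≤ 1 := by
    intro a b ha hb
    nlinarith [ha.1, ha.2, hb.1, hb.2]
  set G : (ℝ × ℝ) × (ℝ → ℝ) → ℝ := fun q => min ((ev q.2 q.1.1 - ev q.2 q.1.2)^2) 1 with hG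
  have hGmeas : Measurable G := by
    apply Measurable.min _ measurable_const
    exact ((measurable_ev measurable_snd measurable_fst.fst).sub
      (measurable_ev measurable_snd measurable_fst.snd)).pow_const 2
  have hG0 : ∀ q, 0 ≤ G q := fun q => le_min (sq_nonneg _) zero_le_one
  have hG1 : ∀ q, G q ≤ 1 := fun q => min_le_right _ _
  have E1 : ∀ ω, (iter Tε S α (m+1) i Q ω x - iter Tε S α (m+1) i T ω x)^2
      = G (Y ω, Tε i ω) := by
    intro ω
    have hiQ : iter Tε S α (m+1) i Q ω x = Tε i ω (A ω) := rfl
    have hiT : iter Tε S α (m+1) i T ω x = Tε i ω (B ω) := rfl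
    have : G (Y ω, Tε i ω) = min ((ev (Tε i ω) (A ω) - ev (Tε i ω) (B ω))^2) 1 := rfl
    rw [hiQ, hiT, this, ev_eq (hTε i ω).1 (hAmem ω), ev_eq (hTε i ω).1 (hBmem ω)]
    exact (min_eq_left (sq_diff_le_one ((hTε i ω).2.2.1 (hAmem ω))
      ((hTε i ω).2.2.1 (hBmem ω)))).symm
  have hpair : AEMeasurable (fun ω => (Y ω, Tε i ω)) P := (hYmeas.prodMk hXmeas).aemeasurable
  have e3 : ∫ ω, (iter Tε S α (m+1) i Q ω x - iter Tε S α (m+1) i T ω x)^2 ∂P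
      = ∫ q, G q ∂((P.map Y).prod (P.map (Tε i))) := by
    rw [← hmap, integral_map hpair hGmeas.aestronglyMeasurable]
    simp only [E1]
  have hGint : Integrable G ((P.map Y).prod (P.map (Tε i))) :=
    integrable_of_bound _ 1 hGmeas.aestronglyMeasurable
      (Filter.Eventually.of_forall fun q => abs_le.mpr ⟨by linarith [hG0 q], hG1 q⟩)
  have e5 : ∫ q, G q ∂((P.map Y).prod (P.map (Tε i)))
      = ∫ ab, ∫ t, G (ab, t) ∂(P.map (Tε i)) ∂(P.map Y) := integral_prod G hGint
  have hinner : ∀ ab : ℝ × ℝ, ab.1 ∈ Icc (0:ℝ) 1 → ab.2 ∈ Icc (0:ℝ) 1 →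
      ∫ t, G (ab, t) ∂(P.map (Tε i)) ≤ Lε^2 * (ab.1 - ab.2)^2 := by
    intro ab h1 h2
    have hGi : Measurable fun t : ℝ → ℝ => G (ab, t) := hGmeas.comp measurable_prodMk_left
    rw [integral_map hXmeas.aemeasurable hGi.aestronglyMeasurable]
    have heq : ∀ ω, G (ab, Tε i ω) = (Tε i ω ab.1 - Tε i ω ab.2)^2 := by
      intro ω
      show min ((ev (Tε i ω) ab.1 - ev (Tε i ω) ab.2)^2) 1 = _
      rw [ev_eq (hTε i ω).1 h1, ev_eq (hTε i ω).1 h2]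
      exact min_eq_left (sq_diff_le_one ((hTε i ω).2.2.1 h1) ((hTε i ω).2.2.1 h2))
    simp only [heq]
    exact hεlip i ab.1 h1 ab.2 h2
  have hae : ∀ᵐ ab ∂(P.map Y), ab.1 ∈ Icc (0:ℝ) 1 ∧ ab.2 ∈ Icc (0:ℝ) 1 := by
    refine (ae_map_iff hYmeas.aemeasurable (p := fun ab => ab.1 ∈ Icc (0:ℝ) 1 ∧ ab.2 ∈ Icc (0:ℝ) 1) ?_).mpr
      (Filter.Eventually.of_forall fun ω => ⟨hAmem ω, hBmem ω⟩)
    exact (measurable_fst measurableSet_Icc).inter (measurable_snd measurableSet_Icc)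
  have hint1 : Integrable (fun ab => ∫ t, G (ab, t) ∂(P.map (Tε i))) (P.map Y) :=
    hGint.integral_prod_left
  have hrhsmeas : Measurable fun ab : ℝ × ℝ => Lε^2 * (ab.1 - ab.2)^2 :=
    ((measurable_fst.sub measurable_snd).pow_const 2).const_mul _
  have hint2 : Integrable (fun ab : ℝ × ℝ => Lε^2 * (ab.1 - ab.2)^2) (P.map Y) := by
    apply integrable_of_bound _ (Lε^2) hrhsmeas.aestronglyMeasurable
    refine hae.mono fun ab h => ?_
    rw [abs_of_nonneg (by positivity)]
    calc Lε^2 * (ab.1 - ab.2)^2 ≤ Lε^2 * 1 :=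
          mul_le_mul_of_nonneg_left (sq_diff_le_one h.1 h.2) (by positivity)
      _ = Lε^2 := mul_one _
  have e6 : ∫ ab, ∫ t, G (ab, t) ∂(P.map (Tε i)) ∂(P.map Y)
      ≤ ∫ ab, Lε^2 * ((ab : ℝ × ℝ).1 - ab.2)^2 ∂(P.map Y) :=
    integral_mono_ae hint1 hint2 (hae.mono fun ab h => hinner ab h.1 h.2)
  have e7 : ∫ ab, Lε^2 * ((ab : ℝ × ℝ).1 - ab.2)^2 ∂(P.map Y)
      = Lε^2 * ∫ ω, (A ω - B ω)^2 ∂P := by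
    rw [integral_map hYmeas.aemeasurable hrhsmeas.aestronglyMeasurable]
    exact integral_const_mul _ _
  have hdQ := measurable_iter_fixed hS hQ hTε hα hTεmeas m (i-1) hx
  have hdT := measurable_iter_fixed hS hT hTε hα hTεmeas m (i-1) hx
  have hdmeas : Measurable fun ω =>
      (iter Tε S α m (i-1) Q ω x - iter Tε S α m (i-1) T ω x)^2 := (hdQ.sub hdT).pow_const 2
  have hABmeas : Measurable fun ω => (A ω - B ω)^2 :=
    ((measurable_fst.comp hYmeas).sub (measurable_snd.comp hYmeas)).pow_const 2
  have hintAB : Integrable (fun ω => (A ω - B ω)^2) P :=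
    integrable_of_bound P 1 hABmeas.aestronglyMeasurable (Filter.Eventually.of_forall fun ω => by
      rw [abs_of_nonneg (sq_nonneg _)]; exact sq_diff_le_one (hAmem ω) (hBmem ω))
  have hintd : Integrable (fun ω => (LS*α)^2 *
      (iter Tε S α m (i-1) Q ω x - iter Tε S α m (i-1) T ω x)^2) P := by
    apply integrable_of_bound P ((LS*α)^2) (hdmeas.const_mul _).aestronglyMeasurable
    refine Filter.Eventually.of_forall fun ω => ?_
    rw [abs_of_nonneg (by positivity)]
    calc (LS*α)^2 * (iter Tε S α m (i-1) Q ω x - iter Tε S α m (i-1) T ω x)^2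
        ≤ (LS*α)^2 * 1 :=
          mul_le_mul_of_nonneg_left (sq_diff_le_one (hQmem ω) (hTmem ω)) (by positivity)
      _ = (LS*α)^2 := mul_one _
  have e8 : ∫ ω, (A ω - B ω)^2 ∂P ≤ (LS*α)^2 *
      ∫ ω, (iter Tε S α m (i-1) Q ω x - iter Tε S α m (i-1) T ω x)^2 ∂P := by
    rw [← integral_const_mul]
    exact integral_mono hintAB hintd hABsq
  calc ∫ ω, (iter Tε S α (m+1) i Q ω x - iter Tε S α (m+1) i T ω x)^2 ∂P
      = ∫ q, G q ∂((P.map Y).prod (P.map (Tε i))) := e3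
    _ = ∫ ab, ∫ t, G (ab, t) ∂(P.map (Tε i)) ∂(P.map Y) := e5
    _ ≤ ∫ ab, Lε^2 * ((ab : ℝ × ℝ).1 - ab.2)^2 ∂(P.map Y) := e6
    _ = Lε^2 * ∫ ω, (A ω - B ω)^2 ∂P := e7
    _ ≤ Lε^2 * ((LS*α)^2 *
        ∫ ω, (iter Tε S α m (i-1) Q ω x - iter Tε S α m (i-1) T ω x)^2 ∂P) :=
          mul_le_mul_of_nonneg_left e8 (by positivity)
    _ = (α*LS*Lε)^2 *
        ∫ ω, (iter Tε S α m (i-1) Q ω x - iter Tε S α m (i-1) T ω x)^2 ∂P := by ring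




lemma prod_aux (P : Measure Ω) [IsProbabilityMeasure P]
    {S : ℝ → ℝ} (hS : InT S) {α : ℝ} (hα : α ∈ Icc (0:ℝ) 1)
    {Tε : ℤ → Ω → ℝ → ℝ} (hTε : ∀ i ω, InT (Tε i ω)) (hTεmeas : ∀ i, Measurable (Tε i))
    (m : ℕ) (i : ℤ) {T Q : ℝ → ℝ} (hT : InT T) (hQ : InT Q) :
    Integrable (Function.uncurry fun ω x =>
        (iter Tε S α m i Q ω x - iter Tε S α m i T ω x)^2)
      (P.prod (volume.restrict (Set.Ioc (0:ℝ) 1))) := by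
  set ν : Measure ℝ := volume.restrict (Set.Ioc (0:ℝ) 1) with hν
  haveI : IsFiniteMeasure ν := by
    constructor
    rw [hν, Measure.restrict_apply_univ, Real.volume_Ioc]
    exact ENNReal.ofReal_lt_top
  have hsnd : ∀ᵐ p : Ω × ℝ ∂(P.prod ν), p.2 ∈ Set.Ioc (0:ℝ) 1 := by
    rw [ae_iff]
    have he : {p : Ω × ℝ | ¬ p.2 ∈ Set.Ioc (0:ℝ) 1} = Set.univ ×ˢ (Set.Ioc (0:ℝ) 1)ᶜ := by
      ext p; simp [Set.mem_prod]
    rw [he, Measure.prod_prod, hν, Measure.restrict_apply measurableSet_Ioc.compl]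
    simp
  have hmap2 : Measurable fun p : Ω × ℝ => ((fun j => Tε j p.1), p.2) :=
    (measurable_pi_lambda _ fun j => (hTεmeas j).comp measurable_fst).prodMk measurable_snd
  set Fe : Ω × ℝ → ℝ := fun p =>
    (eiter S α m i Q (fun j => Tε j p.1) p.2 - eiter S α m i T (fun j => Tε j p.1) p.2)^2
    with hFe
  have hFemeas : Measurable Fe :=
    (((measurable_eiter S α Q m i).comp hmap2).sub
      ((measurable_eiter S α T m i).comp hmap2)).pow_const 2
  have haeeq : Fe =ᵐ[P.prod ν] Function.uncurry fun ω x =>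
      (iter Tε S α m i Q ω x - iter Tε S α m i T ω x)^2 := by
    refine hsnd.mono fun p hp => ?_
    have hp' : p.2 ∈ Icc (0:ℝ) 1 := ⟨le_of_lt hp.1, hp.2⟩
    show Fe p = (iter Tε S α m i Q p.1 p.2 - iter Tε S α m i T p.1 p.2)^2
    rw [hFe]
    simp only []
    rw [eiter_eq hS hQ hTε hα m i p.1 p.2 hp', eiter_eq hS hT hTε hα m i p.1 p.2 hp']
  have hAESM : AEStronglyMeasurable (Function.uncurry fun ω x =>
      (iter Tε S α m i Q ω x - iter Tε S α m i T ω x)^2) (P.prod ν) :=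
    hFemeas.aestronglyMeasurable.congr haeeq
  apply integrable_of_bound _ 1 hAESM
  refine hsnd.mono fun p hp => ?_
  have hp' : p.2 ∈ Icc (0:ℝ) 1 := ⟨le_of_lt hp.1, hp.2⟩
  have h1 := iter_mem hS hQ hTε hα m i p.1 p.2 hp'
  have h2 := iter_mem hS hT hTε hα m i p.1 p.2 hp'
  show |(iter Tε S α m i Q p.1 p.2 - iter Tε S α m i T p.1 p.2)^2| ≤ 1
  rw [abs_of_nonneg (sq_nonneg _)]
  nlinarith [h1.1, h1.2, h2.1, h2.2]

lemma swap_eq (P : Measure Ω) [IsProbabilityMeasure P]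
    {S : ℝ → ℝ} (hS : InT S) {α : ℝ} (hα : α ∈ Icc (0:ℝ) 1)
    {Tε : ℤ → Ω → ℝ → ℝ} (hTε : ∀ i ω, InT (Tε i ω)) (hTεmeas : ∀ i, Measurable (Tε i))
    (m : ℕ) (i : ℤ) {T Q : ℝ → ℝ} (hT : InT T) (hQ : InT Q) :
    (∫ ω, (∫ x in (0:ℝ)..1, (iter Tε S α m i Q ω x - iter Tε S α m i T ω x)^2) ∂P)
      = ∫ x in Set.Ioc (0:ℝ) 1,
          (∫ ω, (iter Tε S α m i Q ω x - iter Tε S α m i T ω x)^2 ∂P) ∂volume := by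
  simp_rw [intervalIntegral.integral_of_le (zero_le_one (α := ℝ))]
  exact integral_integral_swap (prod_aux P hS hα hTε hTεmeas m i hT hQ)

end Main

/-- if `α L_S L_ε < 1` then the iterated system is geometrically moment
contracting with exponent `η = 2`:
`E‖Φ̃_{i,m}(Q) − Φ̃_{i,m}(T)‖₂² ≤ (α L_S L_ε)^{2m} ‖Q − T‖₂²`. -/
theorem geometric_moment_contraction {Ω : Type*} [MeasurableSpace Ω]
    (P : Measure Ω) [IsProbabilityMeasure P]
    (S : ℝ → ℝ) (hS : InT S) (LS : ℝ) (hLS : 0 ≤ LS)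
    (hSlip : ∀ x ∈ Set.Icc (0:ℝ) 1, ∀ y ∈ Set.Icc (0:ℝ) 1, |S x - S y| ≤ LS * |x - y|)
    (α : ℝ) (hα : α ∈ Set.Icc (0:ℝ) 1)
    (Tε : ℤ → Ω → ℝ → ℝ) (hTε : ∀ i ω, InT (Tε i ω))
    (hTεmeas : ∀ i, Measurable (Tε i))
    -- the noise maps are i.i.d. ...
    (hid : ∀ i j, Measure.map (Tε i) P = Measure.map (Tε j) P)
    (hindep : iIndepFun Tε P)
    -- ... with square-mean Lipschitz constant `L_ε`
    (Lε : ℝ) (hLε : 0 ≤ Lε)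
    (hεlip : ∀ i, ∀ x ∈ Set.Icc (0:ℝ) 1, ∀ y ∈ Set.Icc (0:ℝ) 1,
      ∫ ω, (Tε i ω x - Tε i ω y)^2 ∂P ≤ Lε^2 * (x - y)^2)
    (hcontr : α * LS * Lε < 1) :
    ∀ (i : ℤ) (m : ℕ) (T Q : ℝ → ℝ), InT T → InT Q →
      (∫ ω, (∫ x in (0:ℝ)..1, (iter Tε S α m i Q ω x - iter Tε S α m i T ω x)^2) ∂P)
        ≤ (α * LS * Lε)^(2*m) * ∫ x in (0:ℝ)..1, (Q x - T x)^2 := by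
  intro i m T Q hT hQ
  induction m generalizing i with
  | zero =>
    simp only [iter, Nat.mul_zero, pow_zero, one_mul, integral_const, measure_univ,
      ENNReal.toReal_one, probReal_univ, one_smul]
    exact le_rfl
  | succ m ih =>
    haveI : IsFiniteMeasure (volume.restrict (Set.Ioc (0:ℝ) 1)) := by
      constructor
      rw [Measure.restrict_apply_univ, Real.volume_Ioc]
      exact ENNReal.ofReal_lt_top
    have int1 : Integrable (fun x => ∫ ω,
        (iter Tε S α (m+1) i Q ω x - iter Tε S α (m+1) i T ω x)^2 ∂P)
        (volume.restrict (Set.Ioc (0:ℝ) 1)) :=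
      (prod_aux P hS hα hTε hTεmeas (m+1) i hT hQ).integral_prod_right
    have int2 : Integrable (fun x => (α*LS*Lε)^2 * ∫ ω,
        (iter Tε S α m (i-1) Q ω x - iter Tε S α m (i-1) T ω x)^2 ∂P)
        (volume.restrict (Set.Ioc (0:ℝ) 1)) :=
      ((prod_aux P hS hα hTε hTεmeas m (i-1) hT hQ).integral_prod_right).const_mul _
    have hmono : ∀ᵐ x ∂(volume.restrict (Set.Ioc (0:ℝ) 1)),
        (∫ ω, (iter Tε S α (m+1) i Q ω x - iter Tε S α (m+1) i T ω x)^2 ∂P)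
        ≤ (α*LS*Lε)^2 * ∫ ω,
            (iter Tε S α m (i-1) Q ω x - iter Tε S α m (i-1) T ω x)^2 ∂P := by
      refine (ae_restrict_mem measurableSet_Ioc).mono fun x hx => ?_
      exact step_bound P S hS LS hLS hSlip α hα Tε hTε hTεmeas hindep Lε hLε hεlip
        i m T Q hT hQ x ⟨le_of_lt hx.1, hx.2⟩
    calc (∫ ω, (∫ x in (0:ℝ)..1,
            (iter Tε S α (m+1) i Q ω x - iter Tε S α (m+1) i T ω x)^2) ∂P)
        = ∫ x in Set.Ioc (0:ℝ) 1, (∫ ω,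
            (iter Tε S α (m+1) i Q ω x - iter Tε S α (m+1) i T ω x)^2 ∂P) ∂volume :=
          swap_eq P hS hα hTε hTεmeas (m+1) i hT hQ
      _ ≤ ∫ x in Set.Ioc (0:ℝ) 1, (α*LS*Lε)^2 * (∫ ω,
            (iter Tε S α m (i-1) Q ω x - iter Tε S α m (i-1) T ω x)^2 ∂P) ∂volume :=
          integral_mono_ae int1 int2 hmono
      _ = (α*LS*Lε)^2 * ∫ x in Set.Ioc (0:ℝ) 1, (∫ ω,
            (iter Tε S α m (i-1) Q ω x - iter Tε S α m (i-1) T ω x)^2 ∂P) ∂volume :=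
          integral_const_mul _ _
      _ = (α*LS*Lε)^2 * (∫ ω, (∫ x in (0:ℝ)..1,
            (iter Tε S α m (i-1) Q ω x - iter Tε S α m (i-1) T ω x)^2) ∂P) := by
          rw [swap_eq P hS hα hTε hTεmeas m (i-1) hT hQ]
      _ ≤ (α*LS*Lε)^2 * ((α*LS*Lε)^(2*m) * ∫ x in (0:ℝ)..1, (Q x - T x)^2) :=
          mul_le_mul_of_nonneg_left (ih (i-1)) (sq_nonneg _)
      _ = (α*LS*Lε)^(2*(m+1)) * ∫ x in (0:ℝ)..1, (Q x - T x)^2 := by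
          rw [show 2*(m+1) = 2*m + 2 from by ring, pow_add]; ring
end
end

section
/- Let α ∈ [0,1), let T be a random element of 𝒯, and let T_ε be a random element of 𝒯 independent of T with E[T_ε(y)] = y for all y ∈ [0,1]. If the random map T_ε ∘ [αT] has the same law as T (i.e., T is a stationary solution of the iteration T_i = T_{ε_i} ∘ [α T_{i−1}]), then E[T(x)] = x for almost every x ∈ [0,1]; in words, a stationary solution of the Zhu–Müller iteration necessarily has the identity as its mean map. -/
open MeasureTheory ProbabilityTheory

noncomputable section

/-- A surjective enumeration of the rationals. -/
def qEnum : ℕ → ℚ := (exists_surjective_nat ℚ).choose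

lemma qEnum_surj : Function.Surjective qEnum := (exists_surjective_nat ℚ).choose_spec

/-- An enumeration of rationals clamped to `[0,1]`. -/
def rSeq (n : ℕ) : ℝ := max 0 (min 1 ((qEnum n : ℚ) : ℝ))

lemma rSeq_mem (n : ℕ) : rSeq n ∈ Set.Icc (0:ℝ) 1 :=
  ⟨le_max_left _ _, max_le zero_le_one (min_le_left _ _)⟩

lemma rSeq_surj {q : ℚ} (h0 : (0:ℝ) ≤ (q:ℝ)) (h1 : (q:ℝ) ≤ 1) : ∃ n, rSeq n = (q:ℝ) := by
  obtain ⟨n, hn⟩ := qEnum_surj q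
  refine ⟨n, ?_⟩
  rw [rSeq, hn, min_eq_right h1, max_eq_right h0]

/-- Reconstruction of a continuous monotone function from its values at `rSeq`. -/
def GG (y : ℝ) (g : ℕ → ℝ) : ℝ := ⨅ n : ℕ, if y ≤ rSeq n then g n else 1

lemma GG_eq {f : ℝ → ℝ} (hf : InT f) {y : ℝ} (hy : y ∈ Set.Icc (0:ℝ) 1) :
    GG y (fun n => f (rSeq n)) = f y := by
  obtain ⟨hfc, hfm, hfmap, hf0, hf1⟩ := hf
  have hfy : f y ∈ Set.Icc (0:ℝ) 1 := hfmap hy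
  have hbdd : BddBelow (Set.range fun n : ℕ => if y ≤ rSeq n then f (rSeq n) else 1) := by
    refine ⟨0, ?_⟩
    rintro _ ⟨n, rfl⟩
    dsimp only
    split
    · exact (hfmap (rSeq_mem n)).1
    · exact zero_le_one
  refine le_antisymm ?_ ?_
  · -- GG ≤ f y
    refine le_of_forall_pos_le_add fun ε hε => ?_
    rcases eq_or_lt_of_le hy.2 with h1 | h1
    · -- y = 1
      obtain ⟨n, hn⟩ := rSeq_surj (q := 1) (by norm_num) (by norm_num)
      have hyr : y ≤ rSeq n := by rw [hn, Rat.cast_one, ← h1]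
      have : GG y (fun n => f (rSeq n)) ≤ f (rSeq n) := by
        refine (ciInf_le hbdd n).trans ?_
        rw [if_pos hyr]
      refine this.trans ?_
      have : rSeq n = y := by rw [hn, Rat.cast_one, ← h1]
      rw [this]; linarith
    · -- y < 1
      have hcw : ContinuousWithinAt f (Set.Icc 0 1) y := hfc y hy
      rw [Metric.continuousWithinAt_iff] at hcw
      obtain ⟨δ, hδ, hδ'⟩ := hcw ε hε
      obtain ⟨q, hq1, hq2⟩ := exists_rat_btwn (lt_min h1 (by linarith : y < y + δ))
      have hq0 : (0:ℝ) ≤ (q:ℝ) := le_trans hy.1 hq1.le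
      have hq1' : (q:ℝ) ≤ 1 := le_trans hq2.le (min_le_left _ _)
      obtain ⟨n, hn⟩ := rSeq_surj hq0 hq1'
      have hyr : y ≤ rSeq n := by rw [hn]; exact hq1.le
      have hrmem : rSeq n ∈ Set.Icc (0:ℝ) 1 := rSeq_mem n
      have hdist : dist (rSeq n) y < δ := by
        rw [Real.dist_eq, abs_of_nonneg (by linarith)]
        have := hq2.trans_le (min_le_right 1 (y + δ))
        rw [hn]; linarith
      have hfd := hδ' hrmem hdist
      rw [Real.dist_eq] at hfd
      have : f (rSeq n) < f y + ε := by
        have := abs_lt.mp hfd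
        linarith [this.2]
      refine (ciInf_le hbdd n).trans ?_
      rw [if_pos hyr]
      exact this.le
  · -- f y ≤ GG
    refine le_ciInf fun n => ?_
    dsimp only
    split_ifs with h
    · exact hfm.monotoneOn hy (rSeq_mem n) h
    · exact hfy.2

lemma GG_meas : Measurable (fun p : ℝ × (ℕ → ℝ) => GG p.1 p.2) := by
  refine Measurable.iInf fun n => ?_
  refine Measurable.ite ?_ ?_ measurable_const
  · exact measurableSet_le measurable_fst measurable_const
  · exact (measurable_pi_apply n).comp measurable_snd

lemma GG_mem {y : ℝ} {g : ℕ → ℝ} (hg : ∀ n, g n ∈ Set.Icc (0:ℝ) 1) :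
    GG y g ∈ Set.Icc (0:ℝ) 1 := by
  have hbdd : BddBelow (Set.range fun n : ℕ => if y ≤ rSeq n then g n else 1) := by
    refine ⟨0, ?_⟩
    rintro _ ⟨n, rfl⟩
    dsimp only
    split
    · exact (hg n).1
    · exact zero_le_one
  constructor
  · refine le_ciInf fun n => ?_
    split
    · exact (hg n).1
    · exact zero_le_one
  · refine (ciInf_le hbdd 0).trans ?_
    split
    · exact (hg 0).2
    · exact le_rfl

lemma indep_eval_integral {Ω : Type*} [MeasurableSpace Ω] (P : Measure Ω) [IsProbabilityMeasure P]
    (Tε : Ω → ℝ → ℝ) (hTε : ∀ ω, InT (Tε ω)) (hTεmeas : Measurable Tε)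
    (Y : Ω → ℝ) (hY : Measurable Y) (hYmem : ∀ ω, Y ω ∈ Set.Icc (0:ℝ) 1)
    (hind : IndepFun Y Tε P)
    (hmean : ∀ y ∈ Set.Icc (0:ℝ) 1, ∫ ω, Tε ω y ∂P = y) :
    ∫ ω, Tε ω (Y ω) ∂P = ∫ ω, Y ω ∂P := by
  set Z : Ω → ℕ → ℝ := fun ω n => Tε ω (rSeq n) with hZdef
  have hZmeas : Measurable Z :=
    measurable_pi_lambda _ fun n => (measurable_pi_apply (rSeq n)).comp hTεmeas
  have hindZ : IndepFun Y Z P := by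
    have h := hind.comp (φ := id) (ψ := fun f : ℝ → ℝ => fun n => f (rSeq n)) measurable_id
      (measurable_pi_lambda _ fun n => measurable_pi_apply (rSeq n))
    exact h
  haveI : IsProbabilityMeasure (P.map Y) := Measure.isProbabilityMeasure_map hY.aemeasurable
  haveI : IsProbabilityMeasure (P.map Z) := Measure.isProbabilityMeasure_map hZmeas.aemeasurable
  have hmap : Measure.map (fun ω => (Y ω, Z ω)) P = (P.map Y).prod (P.map Z) :=
    (indepFun_iff_map_prod_eq_prod_map_map hY.aemeasurable hZmeas.aemeasurable).mp hindZ
  have hSmeas : MeasurableSet {g : ℕ → ℝ | ∀ n, g n ∈ Set.Icc (0:ℝ) 1} := by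
    have h : {g : ℕ → ℝ | ∀ n, g n ∈ Set.Icc (0:ℝ) 1}
        = ⋂ n, (fun g : ℕ → ℝ => g n) ⁻¹' Set.Icc 0 1 := by ext g; simp
    rw [h]
    exact MeasurableSet.iInter fun n => (measurable_pi_apply n) measurableSet_Icc
  have hZae : ∀ᵐ g ∂(P.map Z), ∀ n, g n ∈ Set.Icc (0:ℝ) 1 := by
    rw [ae_map_iff hZmeas.aemeasurable hSmeas]
    exact ae_of_all _ fun ω n => ((hTε ω).2.2.1 (rSeq_mem n))
  have hprodae : ∀ᵐ p ∂((P.map Y).prod (P.map Z)), ∀ n, p.2 n ∈ Set.Icc (0:ℝ) 1 := by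
    rw [ae_iff]
    have hset : {p : ℝ × (ℕ → ℝ) | ¬ ∀ n, p.2 n ∈ Set.Icc (0:ℝ) 1}
        = Set.univ ×ˢ {g : ℕ → ℝ | ∀ n, g n ∈ Set.Icc (0:ℝ) 1}ᶜ := by
      ext p; simp
    rw [ae_iff] at hZae
    rw [hset, Measure.prod_prod]
    simp only [Set.compl_setOf]
    rw [show ({g : ℕ → ℝ | ∀ n, g n ∈ Set.Icc (0:ℝ) 1}ᶜ : Set (ℕ → ℝ))
        = {g : ℕ → ℝ | ¬ ∀ n, g n ∈ Set.Icc (0:ℝ) 1} by ext g; simp] at *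
    rw [hZae, mul_zero]
  have hInt : Integrable (fun p : ℝ × (ℕ → ℝ) => GG p.1 p.2) ((P.map Y).prod (P.map Z)) := by
    refine (integrable_const (1:ℝ)).mono' GG_meas.aestronglyMeasurable ?_
    filter_upwards [hprodae] with p hp
    have h := GG_mem (y := p.1) (g := p.2) hp
    rw [Real.norm_eq_abs, abs_le]
    exact ⟨by linarith [h.1], h.2⟩
  have hYae : ∀ᵐ y ∂(P.map Y), y ∈ Set.Icc (0:ℝ) 1 :=
    (ae_map_iff hY.aemeasurable measurableSet_Icc).2 (ae_of_all _ hYmem)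
  calc ∫ ω, Tε ω (Y ω) ∂P
      = ∫ ω, GG (Y ω) (Z ω) ∂P :=
        (integral_congr_ae (ae_of_all _ fun ω => GG_eq (hTε ω) (hYmem ω))).symm
    _ = ∫ p : ℝ × (ℕ → ℝ), GG p.1 p.2 ∂(Measure.map (fun ω => (Y ω, Z ω)) P) :=
        (integral_map (hY.prodMk hZmeas).aemeasurable GG_meas.aestronglyMeasurable).symm
    _ = ∫ p : ℝ × (ℕ → ℝ), GG p.1 p.2 ∂((P.map Y).prod (P.map Z)) := by rw [hmap]
    _ = ∫ y, ∫ g, GG y g ∂(P.map Z) ∂(P.map Y) := integral_prod _ hInt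
    _ = ∫ y, y ∂(P.map Y) := by
        refine integral_congr_ae ?_
        filter_upwards [hYae] with y hy
        have hmg : Measurable fun g : ℕ → ℝ => GG y g :=
          GG_meas.comp (measurable_const.prodMk measurable_id)
        have e : ∫ g, GG y g ∂(P.map Z) = ∫ ω, GG y (Z ω) ∂P :=
          integral_map hZmeas.aemeasurable hmg.aestronglyMeasurable
        rw [e, integral_congr_ae (ae_of_all _ fun ω => GG_eq (hTε ω) hy)]
        exact hmean y hy
    _ = ∫ ω, Y ω ∂P := integral_map hY.aemeasurable aestronglyMeasurable_id

/-- if `T` is a stationary solution of the iteration `T_i = T_{ε_i} ∘ [α T_{i−1}]`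
(i.e. `T_ε ∘ [αT]` has the same law as `T`, with `T_ε` independent of `T` and of identity mean),
then `E[T(x)] = x` for almost every `x ∈ [0,1]`. -/
theorem stationary_mean_identity {Ω : Type*} [MeasurableSpace Ω]
    (P : Measure Ω) [IsProbabilityMeasure P]
    (α : ℝ) (hα : α ∈ Set.Ico (0:ℝ) 1)
    (T Tε : Ω → ℝ → ℝ) (hT : ∀ ω, InT (T ω)) (hTε : ∀ ω, InT (Tε ω))
    (hTmeas : Measurable T) (hTεmeas : Measurable Tε)
    (hT'meas : Measurable fun ω => fun x => Tε ω (contrNN α (T ω) x))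
    (hindep : IndepFun T Tε P)
    (hmean : ∀ y ∈ Set.Icc (0:ℝ) 1, ∫ ω, Tε ω y ∂P = y)
    (hstat : Measure.map (fun ω => fun x => Tε ω (contrNN α (T ω) x)) P = Measure.map T P) :
    ∀ᵐ x ∂(volume.restrict (Set.Icc (0:ℝ) 1)), ∫ ω, T ω x ∂P = x := by
  obtain ⟨hα0, hα1⟩ := hα
  have key : ∀ x ∈ Set.Icc (0:ℝ) 1, ∫ ω, T ω x ∂P = x := by
    intro x hx
    have hYmem : ∀ ω, contrNN α (T ω) x ∈ Set.Icc (0:ℝ) 1 := by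
      intro ω
      have h1 := (hT ω).2.2.1 hx
      simp only [Set.mem_Icc] at h1 hx ⊢
      unfold contrNN
      constructor <;> nlinarith [h1.1, h1.2, hx.1, hx.2]
    have hTxmeas : Measurable fun ω => T ω x := (measurable_pi_apply x).comp hTmeas
    have hYmeas : Measurable fun ω => contrNN α (T ω) x := by
      unfold contrNN
      exact measurable_const.add (measurable_const.mul (hTxmeas.sub measurable_const))
    have hindY : IndepFun (fun ω => contrNN α (T ω) x) Tε P := by
      have hφ : Measurable fun f : ℝ → ℝ => contrNN α f x := by
        unfold contrNN
        exact measurable_const.add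
          (measurable_const.mul ((measurable_pi_apply x).sub measurable_const))
      have h := hindep.comp (φ := fun f : ℝ → ℝ => contrNN α f x) (ψ := id) hφ measurable_id
      exact h
    have hstep2 := indep_eval_integral P Tε hTε hTεmeas _ hYmeas hYmem hindY hmean
    have hstep1 : ∫ ω, Tε ω (contrNN α (T ω) x) ∂P = ∫ ω, T ω x ∂P := by
      have e1 : ∫ f : ℝ → ℝ, f x
            ∂(Measure.map (fun ω => fun x => Tε ω (contrNN α (T ω) x)) P)
          = ∫ ω, Tε ω (contrNN α (T ω) x) ∂P :=
        integral_map hT'meas.aemeasurable (measurable_pi_apply x).aestronglyMeasurable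
      have e2 : ∫ f : ℝ → ℝ, f x ∂(Measure.map T P) = ∫ ω, T ω x ∂P :=
        integral_map hTmeas.aemeasurable (measurable_pi_apply x).aestronglyMeasurable
      rw [hstat, e2] at e1
      exact e1.symm
    have hTxInt : Integrable (fun ω => T ω x) P := by
      refine (integrable_const (1:ℝ)).mono' hTxmeas.aestronglyMeasurable
        (ae_of_all _ fun ω => ?_)
      have h := (hT ω).2.2.1 hx
      simp only [Set.mem_Icc] at h
      rw [Real.norm_eq_abs, abs_le]
      exact ⟨by linarith [h.1], h.2⟩
    have hstep3 : ∫ ω, contrNN α (T ω) x ∂P = x + α * ((∫ ω, T ω x ∂P) - x) := by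
      have e : ∫ ω, contrNN α (T ω) x ∂P = ∫ ω, (x + α * (T ω x - x)) ∂P := rfl
      have hA := integral_add (μ := P) (f := fun _ => x) (g := fun ω => α * (T ω x - x))
        (integrable_const x) ((hTxInt.sub (integrable_const x)).const_mul α)
      rw [e, hA, integral_const_mul, integral_sub hTxInt (integrable_const x), integral_const]
      simp
    set m := ∫ ω, T ω x ∂P with hm
    have hfix : m = x + α * (m - x) := hstep1.symm.trans (hstep2.trans hstep3)
    have h4 : (1 - α) * (m - x) = 0 := by linear_combination hfix
    rcases mul_eq_zero.mp h4 with h | h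
    · linarith
    · linarith
  filter_upwards [ae_restrict_mem measurableSet_Icc] with x hx using key x hx
end
end

section
/- Let 0 < L_l ≤ L_u < ∞, 𝒯_{l,u} = {T ∈ 𝒯 : T differentiable with L_l ≤ T′ ≤ L_u}, α ∈ [−1,0), S ∈ 𝒯 be L_S-Lipschitz, and let T_ε be a random element of 𝒯 with E|T_ε(x) − T_ε(y)|² ≤ L_ε²|x−y|² for all x,y ∈ [0,1]. Then for all Q, T ∈ 𝒯_{l,u}: E‖T_ε∘S∘[αQ] − T_ε∘S∘[αT]‖₂² ≤ α²·L_S²·L_ε²·(L_u/L_l)²·‖Q − T‖₂². -/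
open MeasureTheory

noncomputable section

open Set
-- surjectivity
lemma InT.image_eq {Q : ℝ → ℝ} (hQ : InT Q) : Q '' Set.Icc 0 1 = Set.Icc 0 1 := by
  obtain ⟨hc, hm, hmap, h0, h1⟩ := hQ
  apply Subset.antisymm (Set.image_subset_iff.2 hmap)
  have := intermediate_value_Icc (by norm_num : (0:ℝ) ≤ 1) hc
  rwa [h0, h1] at this

lemma InT.tinv_mem_s17 {Q : ℝ → ℝ} (hQ : InT Q) {x : ℝ} (hx : x ∈ Set.Icc (0:ℝ) 1) :
    tinv Q x ∈ Set.Icc (0:ℝ) 1 := by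
  have : x ∈ Q '' Set.Icc 0 1 := by rw [hQ.image_eq]; exact hx
  obtain ⟨y, hy, hyx⟩ := this
  exact Function.invFunOn_mem ⟨y, hy, hyx⟩

lemma InT.apply_tinv {Q : ℝ → ℝ} (hQ : InT Q) {x : ℝ} (hx : x ∈ Set.Icc (0:ℝ) 1) :
    Q (tinv Q x) = x := by
  have : x ∈ Q '' Set.Icc 0 1 := by rw [hQ.image_eq]; exact hx
  obtain ⟨y, hy, hyx⟩ := this
  exact Function.invFunOn_eq ⟨y, hy, hyx⟩

lemma InT.tinv_apply {Q : ℝ → ℝ} (hQ : InT Q) {x : ℝ} (hx : x ∈ Set.Icc (0:ℝ) 1) :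
    tinv Q (Q x) = x :=
  hQ.2.1.injOn.leftInvOn_invFunOn hx

lemma InT.tinv_monotoneOn {Q : ℝ → ℝ} (hQ : InT Q) :
    MonotoneOn (tinv Q) (Set.Icc (0:ℝ) 1) := by
  intro x hx y hy hxy
  by_contra h
  push_neg at h
  have := hQ.2.1 (hQ.tinv_mem_s17 hy) (hQ.tinv_mem_s17 hx) h
  rw [hQ.apply_tinv hx, hQ.apply_tinv hy] at this
  linarith

-- contraction stays in [0,1]
lemma contr_mem {Q : ℝ → ℝ} (hQ : InT Q) {α : ℝ} (hα : α ∈ Set.Ico (-1:ℝ) 0)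
    {x : ℝ} (hx : x ∈ Set.Icc (0:ℝ) 1) : contr α Q x ∈ Set.Icc (0:ℝ) 1 := by
  have hα0 : ¬ (0 ≤ α) := not_le.2 hα.2
  rw [contr, if_neg hα0]
  obtain ⟨ht0, ht1⟩ := hQ.tinv_mem_s17 hx
  obtain ⟨hx0, hx1⟩ := hx
  constructor <;> nlinarith [hα.1, hα.2]

section MVT
variable {T T' : ℝ → ℝ} {Ll Lu : ℝ}
  (hT' : ∀ x ∈ Set.Icc (0:ℝ) 1,
    HasDerivWithinAt T (T' x) (Set.Icc (0:ℝ) 1) x ∧ Ll ≤ T' x ∧ T' x ≤ Lu)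

include hT'

lemma derivAt_interior {x : ℝ} (hx : x ∈ Set.Ioo (0:ℝ) 1) : HasDerivAt T (T' x) x :=
  (hT' x (Set.Ioo_subset_Icc_self hx)).1.hasDerivAt (Icc_mem_nhds hx.1 hx.2)

lemma contOn : ContinuousOn T (Set.Icc 0 1) :=
  fun x hx => ((hT' x hx).1.differentiableWithinAt).continuousWithinAt

lemma lb_slope : ∀ u ∈ Set.Icc (0:ℝ) 1, ∀ v ∈ Set.Icc (0:ℝ) 1, u ≤ v →
    Ll * (v - u) ≤ T v - T u := by
  intro u hu v hv huv
  refine (convex_Icc (0:ℝ) 1).mul_sub_le_image_sub_of_le_deriv (contOn hT')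
    (fun x hx => ?_) (fun x hx => ?_) u hu v hv huv
  · rw [interior_Icc] at hx
    exact (derivAt_interior hT' hx).differentiableAt.differentiableWithinAt
  · rw [interior_Icc] at hx
    rw [(derivAt_interior hT' hx).deriv]
    exact (hT' x (Set.Ioo_subset_Icc_self hx)).2.1

lemma ub_slope : ∀ u ∈ Set.Icc (0:ℝ) 1, ∀ v ∈ Set.Icc (0:ℝ) 1, u ≤ v →
    T v - T u ≤ Lu * (v - u) := by
  intro u hu v hv huv
  refine (convex_Icc (0:ℝ) 1).image_sub_le_mul_sub_of_deriv_le (contOn hT')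
    (fun x hx => ?_) (fun x hx => ?_) u hu v hv huv
  · rw [interior_Icc] at hx
    exact (derivAt_interior hT' hx).differentiableAt.differentiableWithinAt
  · rw [interior_Icc] at hx
    rw [(derivAt_interior hT' hx).deriv]
    exact (hT' x (Set.Ioo_subset_Icc_self hx)).2.2

lemma one_le_Lu (hT : InT T) : 1 ≤ Lu := by
  have := ub_slope hT' 0 (by norm_num) 1 (by norm_num) (by norm_num)
  rw [hT.2.2.2.1, hT.2.2.2.2] at this
  linarith

end MVT

-- the clamp function
def cl (x : ℝ) : ℝ := max 0 (min 1 x)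

lemma cl_mem (x : ℝ) : cl x ∈ Set.Icc (0:ℝ) 1 :=
  ⟨le_max_left _ _, max_le (by norm_num) (min_le_left _ _)⟩

lemma cl_eq {x : ℝ} (hx : x ∈ Set.Icc (0:ℝ) 1) : cl x = x := by
  rw [cl, min_eq_right hx.2, max_eq_right hx.1]

lemma cl_continuous : Continuous cl := by
  unfold cl; fun_prop

lemma cl_monotone : Monotone cl := fun x y h =>
  max_le_max le_rfl (min_le_min le_rfl h)

lemma tinv_cl_monotone {Q : ℝ → ℝ} (hQ : InT Q) : Monotone (fun x => tinv Q (cl x)) :=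
  fun x y h => hQ.tinv_monotoneOn (cl_mem x) (cl_mem y) (cl_monotone h)

-- pointwise inverse bound
lemma tinv_sq_bound {Q T T' : ℝ → ℝ} {Ll Lu : ℝ} (hLl : 0 < Ll)
    (hQ : InT Q) (hT : InT T)
    (hT' : ∀ x ∈ Set.Icc (0:ℝ) 1,
      HasDerivWithinAt T (T' x) (Set.Icc (0:ℝ) 1) x ∧ Ll ≤ T' x ∧ T' x ≤ Lu)
    {x : ℝ} (hx : x ∈ Set.Icc (0:ℝ) 1) :
    Ll^2 * (tinv Q x - tinv T x)^2 ≤ (Q (tinv Q x) - T (tinv Q x))^2 := by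
  set u := tinv Q x with hu
  set v := tinv T x with hv
  have hum := hQ.tinv_mem_s17 hx
  have hvm := hT.tinv_mem_s17 hx
  have hQu : Q u = x := hQ.apply_tinv hx
  have hTv : T v = x := hT.apply_tinv hx
  have key : Ll * |v - u| ≤ |T v - T u| := by
    rcases le_total u v with h | h
    · have := lb_slope hT' u hum v hvm h
      rw [abs_of_nonneg (by linarith), abs_of_nonneg (by nlinarith)]
      linarith
    · have := lb_slope hT' v hvm u hum h
      rw [abs_of_nonpos (by linarith), abs_of_nonpos (by nlinarith)]
      linarith
  have h2 : |T v - T u| = |Q u - T u| := by rw [hTv, hQu]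
  rw [h2] at key
  have : (Ll * |v - u|)^2 ≤ |Q u - T u|^2 := by
    apply pow_le_pow_left₀ (by positivity) key
  calc Ll^2 * (u - v)^2 = (Ll * |v - u|)^2 := by
        rw [mul_pow, sq_abs]; ring_nf
    _ ≤ |Q u - T u|^2 := this
    _ = (Q u - T u)^2 := sq_abs _

-- change of variables
lemma cov {Q Q' : ℝ → ℝ} {Ll Lu : ℝ} (hQ : InT Q)
    (hQ' : ∀ x ∈ Set.Icc (0:ℝ) 1,
      HasDerivWithinAt Q (Q' x) (Set.Icc (0:ℝ) 1) x ∧ Ll ≤ Q' x ∧ Q' x ≤ Lu)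
    (g : ℝ → ℝ) :
    ∫ x in Set.Icc (0:ℝ) 1, g x = ∫ x in Set.Icc (0:ℝ) 1, |Q' x| * g (Q x) := by
  have := integral_image_eq_integral_abs_deriv_smul measurableSet_Icc
    (fun x hx => (hQ' x hx).1) hQ.2.1.injOn g
  rw [hQ.image_eq] at this
  simpa [smul_eq_mul] using this

lemma inv_integral_bound {Q T Q' T' : ℝ → ℝ} {Ll Lu : ℝ} (hLl : 0 < Ll)
    (hQ : InT Q) (hT : InT T)
    (hQ' : ∀ x ∈ Set.Icc (0:ℝ) 1,
      HasDerivWithinAt Q (Q' x) (Set.Icc (0:ℝ) 1) x ∧ Ll ≤ Q' x ∧ Q' x ≤ Lu)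
    (hT' : ∀ x ∈ Set.Icc (0:ℝ) 1,
      HasDerivWithinAt T (T' x) (Set.Icc (0:ℝ) 1) x ∧ Ll ≤ T' x ∧ T' x ≤ Lu) :
    ∫ x in Set.Icc (0:ℝ) 1, (tinv Q x - tinv T x)^2
      ≤ (Lu / Ll^2) * ∫ x in Set.Icc (0:ℝ) 1, (Q x - T x)^2 := by
  set m : ℝ → ℝ := fun y => Q (cl y) - T (cl y) with hm
  set g : ℝ → ℝ := fun u => (m (tinv Q (cl u)))^2 with hg
  have hmcont : Continuous m :=
    ((contOn hQ').comp_continuous cl_continuous cl_mem).sub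
      ((contOn hT').comp_continuous cl_continuous cl_mem)
  have hgmeas : Measurable g :=
    ((hmcont.measurable.comp (tinv_cl_monotone hQ).measurable).pow_const 2)
  have hmbd : ∀ y, |m y| ≤ 1 := by
    intro y
    obtain ⟨hq0, hq1⟩ := hQ.2.2.1 (cl_mem y)
    obtain ⟨ht0, ht1⟩ := hT.2.2.1 (cl_mem y)
    rw [abs_le]; constructor <;> simp only [hm] <;> nlinarith
  have hgbd : ∀ u, g u ≤ 1 := by
    intro u
    have := hmbd (tinv Q (cl u))
    rw [hg]
    calc (m (tinv Q (cl u)))^2 = |m (tinv Q (cl u))|^2 := (sq_abs _).symm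
      _ ≤ 1^2 := by apply pow_le_pow_left₀ (abs_nonneg _) this
      _ = 1 := one_pow _
  have hgint : IntegrableOn g (Set.Icc (0:ℝ) 1) := by
    refine ⟨hgmeas.aestronglyMeasurable, ?_⟩
    apply HasFiniteIntegral.of_bounded (C := 1)
    filter_upwards with u
    rw [Real.norm_eq_abs, abs_of_nonneg (by positivity)]
    exact hgbd u
  -- Step A
  have stepA : ∫ x in Set.Icc (0:ℝ) 1, (tinv Q x - tinv T x)^2
      ≤ ∫ x in Set.Icc (0:ℝ) 1, (1/Ll^2) * g x := by
    apply integral_mono_of_nonneg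
    · filter_upwards with x; positivity
    · exact (hgint.const_mul _)
    · filter_upwards [ae_restrict_mem measurableSet_Icc] with x hx
      have hu := hQ.tinv_mem_s17 hx
      have hgx : g x = (Q (tinv Q x) - T (tinv Q x))^2 := by
        rw [hg, hm]; simp only [cl_eq hx, cl_eq hu]
      rw [hgx]
      have key := tinv_sq_bound hLl hQ hT hT' hx
      have hLl2 : (0:ℝ) < Ll^2 := by positivity
      rw [one_div, inv_mul_eq_div, le_div_iff₀ hLl2, mul_comm]
      exact key
  -- Step B + C
  have hQTint : IntegrableOn (fun x => (Q x - T x)^2) (Set.Icc (0:ℝ) 1) := by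
    apply ContinuousOn.integrableOn_Icc
    exact (((contOn hQ').sub (contOn hT')).pow 2)
  have stepBC : ∫ x in Set.Icc (0:ℝ) 1, g x
      ≤ Lu * ∫ x in Set.Icc (0:ℝ) 1, (Q x - T x)^2 := by
    rw [cov hQ hQ' g, ← integral_const_mul]
    apply integral_mono_of_nonneg
    · filter_upwards with x; positivity
    · exact hQTint.const_mul _
    · filter_upwards [ae_restrict_mem measurableSet_Icc] with x hx
      have hQx := hQ.2.2.1 hx
      have h1 : g (Q x) = (Q x - T x)^2 := by
        simp only [hg, hm]; rw [cl_eq hQx, hQ.tinv_apply hx, cl_eq hx]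
      rw [h1]
      have h2 : |Q' x| = Q' x := abs_of_pos (lt_of_lt_of_le hLl (hQ' x hx).2.1)
      rw [h2]
      have := (hQ' x hx).2.2
      nlinarith [sq_nonneg (Q x - T x)]
  calc ∫ x in Set.Icc (0:ℝ) 1, (tinv Q x - tinv T x)^2
      ≤ ∫ x in Set.Icc (0:ℝ) 1, (1/Ll^2) * g x := stepA
    _ = (1/Ll^2) * ∫ x in Set.Icc (0:ℝ) 1, g x := integral_const_mul _ _
    _ ≤ (1/Ll^2) * (Lu * ∫ x in Set.Icc (0:ℝ) 1, (Q x - T x)^2) := by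
        apply mul_le_mul_of_nonneg_left stepBC (by positivity)
    _ = (Lu / Ll^2) * ∫ x in Set.Icc (0:ℝ) 1, (Q x - T x)^2 := by ring


/-- for `α ∈ [−1,0)`, `S` an `L_S`-Lipschitz element of 𝒯, noise `T_ε` with
square-mean Lipschitz constant `L_ε`, and `Q, T ∈ 𝒯_{l,u}`:
`E‖T_ε∘S∘[αQ] − T_ε∘S∘[αT]‖₂² ≤ α² L_S² L_ε² (L_u/L_l)² ‖Q − T‖₂²`. -/
theorem negative_alpha_contraction {Ω : Type*} [MeasurableSpace Ω]
    (P : Measure Ω) [IsProbabilityMeasure P]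
    (Ll Lu : ℝ) (hLl : 0 < Ll) (hLu : Ll ≤ Lu)
    (α : ℝ) (hα : α ∈ Set.Ico (-1 : ℝ) 0)
    (S : ℝ → ℝ) (hS : InT S) (LS : ℝ) (hLS : 0 ≤ LS)
    (hSlip : ∀ x ∈ Set.Icc (0:ℝ) 1, ∀ y ∈ Set.Icc (0:ℝ) 1, |S x - S y| ≤ LS * |x - y|)
    (Tε : Ω → ℝ → ℝ) (hTε : ∀ ω, InT (Tε ω)) (hTεmeas : Measurable Tε)
    (Lε : ℝ) (hLε : 0 ≤ Lε)
    (hεlip : ∀ x ∈ Set.Icc (0:ℝ) 1, ∀ y ∈ Set.Icc (0:ℝ) 1,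
      ∫ ω, (Tε ω x - Tε ω y)^2 ∂P ≤ Lε^2 * (x - y)^2) :
    ∀ (Q T Q' T' : ℝ → ℝ), InT Q → InT T →
      (∀ x ∈ Set.Icc (0:ℝ) 1,
        HasDerivWithinAt Q (Q' x) (Set.Icc (0:ℝ) 1) x ∧ Ll ≤ Q' x ∧ Q' x ≤ Lu) →
      (∀ x ∈ Set.Icc (0:ℝ) 1,
        HasDerivWithinAt T (T' x) (Set.Icc (0:ℝ) 1) x ∧ Ll ≤ T' x ∧ T' x ≤ Lu) →
      (∫ ω, (∫ x in (0:ℝ)..1, (Tε ω (S (contr α Q x)) - Tε ω (S (contr α T x)))^2) ∂P)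
        ≤ α^2 * LS^2 * Lε^2 * (Lu / Ll)^2 * ∫ x in (0:ℝ)..1, (Q x - T x)^2 := by
  intro Q T Q' T' hQ hT hQ' hT'
  have hα0 : ¬ (0 ≤ α) := not_le.2 hα.2
  -- clamped versions
  set tq : ℝ → ℝ := fun x => tinv Q (cl x) with htq
  set tt : ℝ → ℝ := fun x => tinv T (cl x) with htt
  set cQ : ℝ → ℝ := fun x => cl x + α * (cl x - tq x) with hcQ
  set cT : ℝ → ℝ := fun x => cl x + α * (cl x - tt x) with hcT
  have hcQ_eq : ∀ x, cQ x = contr α Q (cl x) := by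
    intro x; rw [hcQ, contr, if_neg hα0]
  have hcT_eq : ∀ x, cT x = contr α T (cl x) := by
    intro x; rw [hcT, contr, if_neg hα0]
  have hcQmem : ∀ x, cQ x ∈ Set.Icc (0:ℝ) 1 := fun x =>
    hcQ_eq x ▸ contr_mem hQ hα (cl_mem x)
  have hcTmem : ∀ x, cT x ∈ Set.Icc (0:ℝ) 1 := fun x =>
    hcT_eq x ▸ contr_mem hT hα (cl_mem x)
  set Sc : ℝ → ℝ := fun y => S (cl y) with hSc
  have hSccont : Continuous Sc := hS.1.comp_continuous cl_continuous cl_mem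
  set A : ℝ → ℝ := fun x => Sc (cQ x) with hA
  set B : ℝ → ℝ := fun x => Sc (cT x) with hB
  have hcQmeas : Measurable cQ := by
    exact (cl_continuous.measurable).add
      (measurable_const.mul ((cl_continuous.measurable).sub (tinv_cl_monotone hQ).measurable))
  have hcTmeas : Measurable cT := by
    exact (cl_continuous.measurable).add
      (measurable_const.mul ((cl_continuous.measurable).sub (tinv_cl_monotone hT).measurable))
  have hAmeas : Measurable A := hSccont.measurable.comp hcQmeas
  have hBmeas : Measurable B := hSccont.measurable.comp hcTmeas
  have hAmem : ∀ x, A x ∈ Set.Icc (0:ℝ) 1 := fun x => hS.2.2.1 (cl_mem _)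
  have hBmem : ∀ x, B x ∈ Set.Icc (0:ℝ) 1 := fun x => hS.2.2.1 (cl_mem _)
  -- the jointly measurable integrand
  set G : Ω → ℝ → ℝ := fun ω x => (Tε ω (A x) - Tε ω (B x))^2 with hG
  have hH : Measurable (Function.uncurry (fun (t : ℝ) (ω : Ω) => Tε ω (cl t))) := by
    apply measurable_uncurry_of_continuous_of_measurable
    · intro ω
      exact (hTε ω).1.comp_continuous cl_continuous cl_mem
    · intro t
      exact (measurable_pi_apply (cl t)).comp hTεmeas
  have hGmeas : Measurable (Function.uncurry G) := by
    have h1 : Function.uncurry G = fun p : Ω × ℝ =>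
        ((Function.uncurry (fun (t : ℝ) (ω : Ω) => Tε ω (cl t))) (A p.2, p.1)
          - (Function.uncurry (fun (t : ℝ) (ω : Ω) => Tε ω (cl t))) (B p.2, p.1))^2 := by
      funext p
      simp only [Function.uncurry, hG, cl_eq (hAmem p.2), cl_eq (hBmem p.2)]
    rw [h1]
    exact ((hH.comp ((hAmeas.comp measurable_snd).prodMk measurable_fst)).sub
      (hH.comp ((hBmeas.comp measurable_snd).prodMk measurable_fst))).pow_const 2
  have hGbd : ∀ ω x, G ω x ≤ 1 ∧ 0 ≤ G ω x := by
    intro ω x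
    obtain ⟨h1, h2⟩ := (hTε ω).2.2.1 (hAmem x)
    obtain ⟨h3, h4⟩ := (hTε ω).2.2.1 (hBmem x)
    exact ⟨by simp only [hG]; nlinarith, by positivity⟩
  set ν : Measure ℝ := volume.restrict (Set.Ioc 0 1) with hν
  have hGint : Integrable (Function.uncurry G) (P.prod ν) := by
    refine ⟨hGmeas.aestronglyMeasurable, ?_⟩
    apply HasFiniteIntegral.of_bounded (C := 1)
    filter_upwards with p
    show ‖G p.1 p.2‖ ≤ 1
    rw [Real.norm_eq_abs, abs_of_nonneg (hGbd p.1 p.2).2]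
    exact (hGbd p.1 p.2).1
  -- rewrite LHS
  have hLHS : (∫ ω, (∫ x in (0:ℝ)..1,
      (Tε ω (S (contr α Q x)) - Tε ω (S (contr α T x)))^2) ∂P)
      = ∫ ω, (∫ x, G ω x ∂ν) ∂P := by
    congr 1
    funext ω
    rw [intervalIntegral.integral_of_le (by norm_num : (0:ℝ) ≤ 1)]
    apply setIntegral_congr_fun measurableSet_Ioc
    intro x hx
    have hx' : x ∈ Set.Icc (0:ℝ) 1 := Set.Ioc_subset_Icc_self hx
    have e1 : contr α Q x = cQ x := by rw [hcQ_eq, cl_eq hx']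
    have e2 : contr α T x = cT x := by rw [hcT_eq, cl_eq hx']
    simp only [hG, hA, hB, hSc, e1, e2, cl_eq (hcQmem x), cl_eq (hcTmem x)]
  rw [hLHS, integral_integral_swap hGint]
  -- pointwise-in-x bound of the inner P-integral
  set C1 : ℝ := Lε^2 * LS^2 * α^2 with hC1
  have hC1nn : 0 ≤ C1 := by positivity
  have htqmem : ∀ x, tq x ∈ Set.Icc (0:ℝ) 1 := fun x => hQ.tinv_mem_s17 (cl_mem x)
  have httmem : ∀ x, tt x ∈ Set.Icc (0:ℝ) 1 := fun x => hT.tinv_mem_s17 (cl_mem x)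
  have hdiffint : Integrable (fun x => C1 * (tq x - tt x)^2) ν := by
    refine Integrable.const_mul ⟨?_, ?_⟩ _
    · exact (((tinv_cl_monotone hQ).measurable.sub
        (tinv_cl_monotone hT).measurable).pow_const 2).aestronglyMeasurable
    · apply HasFiniteIntegral.of_bounded (C := 1)
      filter_upwards with x
      obtain ⟨a1, a2⟩ := htqmem x
      obtain ⟨b1, b2⟩ := httmem x
      rw [Real.norm_eq_abs, abs_of_nonneg (by positivity)]
      nlinarith
  have step1 : ∫ x, (∫ ω, G ω x ∂P) ∂ν ≤ ∫ x, C1 * (tq x - tt x)^2 ∂ν := by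
    apply integral_mono_of_nonneg
    · filter_upwards with x
      apply integral_nonneg
      intro ω
      exact (hGbd ω x).2
    · exact hdiffint
    · filter_upwards with x
      have key : ∫ ω, G ω x ∂P ≤ Lε^2 * (A x - B x)^2 :=
        hεlip (A x) (hAmem x) (B x) (hBmem x)
      have hab : (A x - B x)^2 ≤ LS^2 * (cQ x - cT x)^2 := by
        have hs := hSlip (cQ x) (hcQmem x) (cT x) (hcTmem x)
        have : |S (cQ x) - S (cT x)|^2 ≤ (LS * |cQ x - cT x|)^2 :=
          pow_le_pow_left₀ (abs_nonneg _) hs 2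
        have e : A x - B x = S (cQ x) - S (cT x) := by
          simp only [hA, hB, hSc, cl_eq (hcQmem x), cl_eq (hcTmem x)]
        rw [e, ← sq_abs (S (cQ x) - S (cT x))]
        calc |S (cQ x) - S (cT x)|^2 ≤ (LS * |cQ x - cT x|)^2 := this
          _ = LS^2 * (cQ x - cT x)^2 := by rw [mul_pow, sq_abs]
      have e3 : (cQ x - cT x)^2 = α^2 * (tq x - tt x)^2 := by
        have : cQ x - cT x = α * (tt x - tq x) := by rw [hcQ, hcT]; ring
        rw [this]; ring
      calc ∫ ω, G ω x ∂P ≤ Lε^2 * (A x - B x)^2 := key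
        _ ≤ Lε^2 * (LS^2 * (cQ x - cT x)^2) := by
            apply mul_le_mul_of_nonneg_left hab (by positivity)
        _ = C1 * (tq x - tt x)^2 := by rw [e3, hC1]; ring
  -- identify with the tinv integral over Icc
  have step2 : ∫ x, C1 * (tq x - tt x)^2 ∂ν
      = C1 * ∫ x in Set.Icc (0:ℝ) 1, (tinv Q x - tinv T x)^2 := by
    rw [integral_const_mul]
    congr 1
    rw [hν, ← integral_Icc_eq_integral_Ioc]
    apply setIntegral_congr_fun measurableSet_Icc
    intro x hx
    simp only [htq, htt, cl_eq hx]
  have step3 := inv_integral_bound hLl hQ hT hQ' hT'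
  have hI : ∫ x in Set.Icc (0:ℝ) 1, (Q x - T x)^2 = ∫ x in (0:ℝ)..1, (Q x - T x)^2 := by
    rw [intervalIntegral.integral_of_le (by norm_num : (0:ℝ) ≤ 1),
      integral_Icc_eq_integral_Ioc]
  have hInn : 0 ≤ ∫ x in (0:ℝ)..1, (Q x - T x)^2 := by
    apply intervalIntegral.integral_nonneg (by norm_num : (0:ℝ) ≤ 1)
    intro x _; positivity
  have hLu1 : 1 ≤ Lu := one_le_Lu hT' hT
  calc ∫ x, (∫ ω, G ω x ∂P) ∂ν ≤ C1 * ∫ x in Set.Icc (0:ℝ) 1, (tinv Q x - tinv T x)^2 := by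
        rw [← step2]; exact step1
    _ ≤ C1 * ((Lu / Ll^2) * ∫ x in Set.Icc (0:ℝ) 1, (Q x - T x)^2) := by
        apply mul_le_mul_of_nonneg_left step3 hC1nn
    _ = (C1 * (Lu / Ll^2)) * ∫ x in (0:ℝ)..1, (Q x - T x)^2 := by rw [hI]; ring
    _ ≤ α^2 * LS^2 * Lε^2 * (Lu / Ll)^2 * ∫ x in (0:ℝ)..1, (Q x - T x)^2 := by
        apply mul_le_mul_of_nonneg_right _ hInn
        have e : α^2 * LS^2 * Lε^2 * (Lu / Ll)^2 = Lε^2 * LS^2 * α^2 * (Lu^2 / Ll^2) := by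
          rw [div_pow]; ring
        rw [hC1, e]
        apply mul_le_mul_of_nonneg_left _ (by positivity)
        gcongr
        nlinarith
end
end

section
/- Let S ∈ 𝒯, α ∈ [0,1), let T be a random element of 𝒯, and let T_ε be a random element of 𝒯 independent of T with E[T_ε(y)] = y for all y ∈ [0,1]. Define the contraction around S by α[T,S](x) = S(x) + α(T(x) − S(x)). If the random map T_ε ∘ α[T,S] has the same law as T (i.e., T is a stationary solution of the system T_i = T_{ε_i} ∘ α[T_{i−1},S]), then E[T(x)] = S(x) for all x ∈ [0,1]; that is, the mean map of any stationary solution of the generalised contraction system equals S. -/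
open MeasureTheory ProbabilityTheory ENNReal

noncomputable section

/-- The α-contraction of a map `T` around a map `S`: `α[T,S](x) = S(x) + α(T(x) − S(x))`. -/
def contrAround (α : ℝ) (T S : ℝ → ℝ) (x : ℝ) : ℝ := S x + α * (T x - S x)

abbrev QI : Type := {q : ℚ // (q : ℝ) ∈ Set.Icc (0 : ℝ) 1}

def G (p : ℝ × (ℝ → ℝ)) : ℝ≥0∞ :=
  ⨆ q : QI, if ((q.1 : ℝ) ≤ p.1) then ENNReal.ofReal (p.2 (q.1 : ℝ)) else 0

lemma G_meas : Measurable G := by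
  apply Measurable.iSup
  intro q
  apply Measurable.ite
  · exact measurable_fst measurableSet_Ici
  · exact ENNReal.measurable_ofReal.comp ((measurable_pi_apply _).comp measurable_snd)
  · exact measurable_const

lemma G_eq (v : ℝ → ℝ) (hv : InT v) (y : ℝ) (hy : y ∈ Set.Icc (0:ℝ) 1) :
    G (y, v) = ENNReal.ofReal (v y) := by
  obtain ⟨hvc, hvm, hvmap, hv0, hv1⟩ := hv
  apply le_antisymm
  · apply iSup_le
    rintro ⟨q, hq⟩
    dsimp only
    split_ifs with h
    · exact ENNReal.ofReal_le_ofReal (hvm.monotoneOn hq hy h)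
    · exact zero_le
  · rcases eq_or_lt_of_le hy.1 with h0 | h0
    · have : v y = 0 := by rw [← h0, hv0]
      simp [this]
    · have hcy : ContinuousWithinAt v (Set.Icc 0 1) y := hvc y hy
      have key : ∀ ε > (0:ℝ), ENNReal.ofReal (v y - ε) ≤ G (y, v) := by
        intro ε hε
        rw [Metric.continuousWithinAt_iff] at hcy
        obtain ⟨δ, hδ, hd⟩ := hcy ε hε
        obtain ⟨q, hq1, hq2⟩ := exists_rat_btwn (show max (y - δ) 0 < y by
          simp [sub_lt_self _ hδ, h0])
        have hq0 : (0:ℝ) ≤ q := le_of_lt (lt_of_le_of_lt (le_max_right _ _) hq1)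
        have hqI : (q:ℝ) ∈ Set.Icc (0:ℝ) 1 := ⟨hq0, le_trans hq2.le hy.2⟩
        have hdist : dist (q:ℝ) y < δ := by
          rw [Real.dist_eq, abs_sub_lt_iff]
          constructor
          · linarith
          · have := lt_of_le_of_lt (le_max_left _ _) hq1; linarith
        have := hd hqI hdist
        rw [Real.dist_eq, abs_sub_lt_iff] at this
        calc ENNReal.ofReal (v y - ε) ≤ ENNReal.ofReal (v (q:ℝ)) :=
              ENNReal.ofReal_le_ofReal (by linarith [this.2])
          _ ≤ G (y, v) := by
              refine le_trans ?_ (le_iSup _ (⟨q, hqI⟩ : QI))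
              simp [hq2.le]
      have htend : Filter.Tendsto (fun n : ℕ => ENNReal.ofReal (v y - 1/(n+1)))
          Filter.atTop (nhds (ENNReal.ofReal (v y))) := by
        apply ENNReal.continuous_ofReal.continuousAt.tendsto.comp
        have : Filter.Tendsto (fun n : ℕ => 1/((n:ℝ)+1)) Filter.atTop (nhds 0) :=
          tendsto_one_div_add_atTop_nhds_zero_nat
        simpa using Filter.Tendsto.const_sub (v y) this
      exact le_of_tendsto htend (Filter.Eventually.of_forall fun n =>
        key _ (by positivity))

lemma int_of_bdd {Ω : Type*} [MeasurableSpace Ω] (P : Measure Ω) [IsProbabilityMeasure P]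
    (f : Ω → ℝ) (hf : Measurable f) (hb : ∀ ω, f ω ∈ Set.Icc (0:ℝ) 1) :
    Integrable f P := by
  refine ⟨hf.aestronglyMeasurable, HasFiniteIntegral.of_bounded (C := 1)
    (Filter.Eventually.of_forall fun ω => ?_)⟩
  rw [Real.norm_eq_abs, abs_le]
  exact ⟨by linarith [(hb ω).1], (hb ω).2⟩

/-- if `T` is a stationary solution of the generalised contraction system
`T_i = T_{ε_i} ∘ α[T_{i−1}, S]` (i.e. `T_ε ∘ α[T,S]` has the same law as `T`, with `T_ε`
independent of `T` and of identity mean), then `E[T(x)] = S(x)` for all `x ∈ [0,1]`. -/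
theorem stationary_mean_eq_S {Ω : Type*} [MeasurableSpace Ω]
    (P : Measure Ω) [IsProbabilityMeasure P]
    (S : ℝ → ℝ) (hS : InT S) (α : ℝ) (hα : α ∈ Set.Ico (0:ℝ) 1)
    (T Tε : Ω → ℝ → ℝ) (hT : ∀ ω, InT (T ω)) (hTε : ∀ ω, InT (Tε ω))
    (hTmeas : Measurable T) (hTεmeas : Measurable Tε)
    (hT'meas : Measurable fun ω => fun x => Tε ω (contrAround α (T ω) S x))
    (hindep : IndepFun T Tε P)
    (hmean : ∀ y ∈ Set.Icc (0:ℝ) 1, ∫ ω, Tε ω y ∂P = y)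
    (hstat : Measure.map (fun ω => fun x => Tε ω (contrAround α (T ω) S x)) P
      = Measure.map T P) :
    ∀ x ∈ Set.Icc (0:ℝ) 1, ∫ ω, T ω x ∂P = S x := by
  intro x hx
  obtain ⟨hα0, hα1⟩ := hα
  set c : Ω → ℝ := fun ω => contrAround α (T ω) S x with hc_def
  have hSx : S x ∈ Set.Icc (0:ℝ) 1 := hS.2.2.1 hx
  have hcI : ∀ ω, c ω ∈ Set.Icc (0:ℝ) 1 := by
    intro ω
    have hTx : T ω x ∈ Set.Icc (0:ℝ) 1 := (hT ω).2.2.1 hx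
    constructor
    · simp only [hc_def, contrAround]; nlinarith [hSx.1, hSx.2, hTx.1, hTx.2]
    · simp only [hc_def, contrAround]; nlinarith [hSx.1, hSx.2, hTx.1, hTx.2]
  have hcmeas : Measurable c := by
    simp only [hc_def, contrAround]
    exact measurable_const.add (measurable_const.mul
      (((measurable_pi_apply x).comp hTmeas).sub measurable_const))
  have hTcI : ∀ ω, Tε ω (c ω) ∈ Set.Icc (0:ℝ) 1 := fun ω => (hTε ω).2.2.1 (hcI ω)
  have hTcmeas : Measurable fun ω => Tε ω (c ω) := (measurable_pi_apply x).comp hT'meas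
  have hTxI : ∀ ω, T ω x ∈ Set.Icc (0:ℝ) 1 := fun ω => (hT ω).2.2.1 hx
  have hTxmeas : Measurable fun ω => T ω x := (measurable_pi_apply x).comp hTmeas
  -- independence of c and Tε
  have hφ : Measurable (fun u : ℝ → ℝ => contrAround α u S x) :=
    measurable_const.add (measurable_const.mul ((measurable_pi_apply x).sub measurable_const))
  have hindep' : IndepFun c Tε P := hindep.comp hφ measurable_id
  have hρ : Measure.map (fun ω => (c ω, Tε ω)) P
      = (Measure.map c P).prod (Measure.map Tε P) :=
    (indepFun_iff_map_prod_eq_prod_map_map hcmeas.aemeasurable hTεmeas.aemeasurable).mp hindep'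
  haveI : IsProbabilityMeasure (Measure.map Tε P) :=
    Measure.isProbabilityMeasure_map hTεmeas.aemeasurable
  haveI : IsProbabilityMeasure (Measure.map c P) :=
    Measure.isProbabilityMeasure_map hcmeas.aemeasurable
  -- key identity:  ∫⁻ ofReal (Tε ω (c ω)) = ∫⁻ ofReal (c ω)
  have hkeyL : ∫⁻ ω, ENNReal.ofReal (Tε ω (c ω)) ∂P = ∫⁻ ω, ENNReal.ofReal (c ω) ∂P := by
    have step1 : ∫⁻ ω, ENNReal.ofReal (Tε ω (c ω)) ∂P
        = ∫⁻ p, G p ∂((Measure.map c P).prod (Measure.map Tε P)) := by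
      rw [← hρ, lintegral_map G_meas (hcmeas.prodMk hTεmeas)]
      exact lintegral_congr fun ω => (G_eq (Tε ω) (hTε ω) _ (hcI ω)).symm
    have step2 : ∫⁻ p, G p ∂((Measure.map c P).prod (Measure.map Tε P))
        = ∫⁻ y, ∫⁻ v, G (y, v) ∂(Measure.map Tε P) ∂(Measure.map c P) :=
      lintegral_prod _ G_meas.aemeasurable
    have hμc_ae : ∀ᵐ y ∂(Measure.map c P), y ∈ Set.Icc (0:ℝ) 1 :=
      (ae_map_iff hcmeas.aemeasurable measurableSet_Icc).mpr
        (Filter.Eventually.of_forall hcI)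
    have inner : ∀ y ∈ Set.Icc (0:ℝ) 1,
        ∫⁻ v, G (y, v) ∂(Measure.map Tε P) = ENNReal.ofReal y := by
      intro y hy
      rw [lintegral_map (show Measurable fun v : ℝ → ℝ => G (y, v) from
        G_meas.comp measurable_prodMk_left) hTεmeas]
      have h1 : ∀ ω, G (y, Tε ω) = ENNReal.ofReal (Tε ω y) :=
        fun ω => G_eq _ (hTε ω) y hy
      have hTεy : Measurable fun ω => Tε ω y := (measurable_pi_apply y).comp hTεmeas
      rw [lintegral_congr h1,
        ← ofReal_integral_eq_lintegral_ofReal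
          (int_of_bdd P _ hTεy (fun ω => (hTε ω).2.2.1 hy))
          (Filter.Eventually.of_forall fun ω => ((hTε ω).2.2.1 hy).1),
        hmean y hy]
    have step3 : ∫⁻ y, ∫⁻ v, G (y, v) ∂(Measure.map Tε P) ∂(Measure.map c P)
        = ∫⁻ y, ENNReal.ofReal y ∂(Measure.map c P) :=
      lintegral_congr_ae (hμc_ae.mono fun y hy => inner y hy)
    have step4 : ∫⁻ y, ENNReal.ofReal y ∂(Measure.map c P)
        = ∫⁻ ω, ENNReal.ofReal (c ω) ∂P :=
      lintegral_map ENNReal.measurable_ofReal hcmeas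
    rw [step1, step2, step3, step4]
  -- convert to real integrals
  have hkey : ∫ ω, Tε ω (c ω) ∂P = ∫ ω, c ω ∂P := by
    have e1 := ofReal_integral_eq_lintegral_ofReal
      (int_of_bdd P _ hTcmeas hTcI) (Filter.Eventually.of_forall fun ω => (hTcI ω).1)
    have e2 := ofReal_integral_eq_lintegral_ofReal
      (int_of_bdd P _ hcmeas hcI) (Filter.Eventually.of_forall fun ω => (hcI ω).1)
    have := e1.trans (hkeyL.trans e2.symm)
    rwa [ENNReal.ofReal_eq_ofReal_iff
      (integral_nonneg fun ω => (hTcI ω).1) (integral_nonneg fun ω => (hcI ω).1)] at this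
  -- stationarity : ∫ T x = ∫ Tε (c)
  have hm : ∫ ω, T ω x ∂P = ∫ ω, Tε ω (c ω) ∂P := by
    have h1 : ∫ v, (fun v : ℝ → ℝ => v x) v ∂(Measure.map T P) = ∫ ω, T ω x ∂P :=
      integral_map hTmeas.aemeasurable (measurable_pi_apply x).aestronglyMeasurable
    have h2 : ∫ v, (fun v : ℝ → ℝ => v x) v
        ∂(Measure.map (fun ω => fun x => Tε ω (contrAround α (T ω) S x)) P)
        = ∫ ω, Tε ω (c ω) ∂P :=
      integral_map hT'meas.aemeasurable (measurable_pi_apply x).aestronglyMeasurable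
    rw [← h1, ← h2, hstat]
  -- compute ∫ c
  have hic : ∫ ω, c ω ∂P = S x + α * ((∫ ω, T ω x ∂P) - S x) := by
    have hint : Integrable (fun ω => T ω x) P := int_of_bdd P _ hTxmeas hTxI
    simp only [hc_def, contrAround]
    have h0 : Integrable (fun ω => T ω x - S x) P := hint.sub (integrable_const _)
    have h1 : Integrable (fun ω => α * (T ω x - S x)) P := h0.const_mul α
    rw [integral_add (integrable_const _) h1, integral_const, integral_const_mul,
      integral_sub hint (integrable_const _), integral_const]
    simp
  have heq : ∫ ω, T ω x ∂P = S x + α * ((∫ ω, T ω x ∂P) - S x) :=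
    hm.trans (hkey.trans hic)
  have h2 : (1 - α) * ((∫ ω, T ω x ∂P) - S x) = 0 := by linear_combination heq
  rcases mul_eq_zero.mp h2 with h | h
  · linarith
  · linarith [sub_eq_zero.mp h]
end
end
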